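/- arXiv:1407.2367 — 3 statements merged into one kernel-verified Lean document; each statement's English description precedes it below -/
import Mathlib

section
/- Fix integers p ≥ 1 and N ≥ 1, a partition x_0 < x_1 < ⋯ < x_N, data y_{n,2k} ∈ ℝ (0 ≤ n ≤ N, 0 ≤ k ≤ p), and an integer k with 1 ≤ k ≤ p. Let μ = min_{1 ≤ n ≤ N} a_n. Let α', α'' ∈ Θ_{2p} with |α'|_∞ < μ^{2k}, and let ℓ_{α'} and ℓ_{α''} be 2p-times continuously differentiable functions on [x_0,x_N] satisfying ℓ_{α'}(L_n(x)) = α'_n ℓ_{α'}(x) + q_n(α'_n, x) and ℓ_{α''}(L_n(x)) = α''_n ℓ_{α''}(x) + q_n(α''_n, x) for all x ∈ [x_0,x_N] and 1 ≤ n ≤ N. Then ‖ℓ_{α'}^{(2k)} − ℓ_{α''}^{(2k)}‖_∞ ≤ (|α' − α''|_∞ / (μ^{2k} − |α'|_∞)) · (‖ℓ_{α''}^{(2k)}‖_∞ + M_{2k,2p}), where |α|_∞ = max_n |α_n|, ‖·‖_∞ denotes the supremum norm over [x_0,x_N], and M_{2k,2p} = (2ρπ/3) Σ_{l=0}^{p−k}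 ((x_N − x_0)/π)^{2l}. -/
open Real Set Polynomial


private lemma pisq_lt : π * π < 9.9225 := by nlinarith [pi_lt_d2, pi_gt_three]

private lemma sin_aux : ∀ u : ℝ, 0 ≤ u → u ≤ 1/2 → 3*(u*(1-u)) ≤ Real.sin (π*u) := by
  intro u hu0 hu2
  rcases eq_or_lt_of_le hu0 with h|h
  · simp [← h]
  rcases le_or_gt (π * u) 1 with hx1|hgt
  · have hx0 : 0 < π * u := by positivity
    have hs := Real.sin_gt_sub_cube hx0
    have h3 : (π*u)^3 ≤ (π*u)^2 :=
      pow_le_pow_of_le_one hx0.le hx1 (by norm_num)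
    nlinarith [pisq_lt, pi_gt_three, mul_pos pi_pos h, sq_nonneg u,
      mul_nonneg hu0 hu0, mul_le_mul_of_nonneg_right pi_gt_three.le hu0]
  · -- 1 < π*u ≤ π/2
    have h2 : π * u ≤ π / 2 := by nlinarith [pi_pos]
    have hs1 : Real.sin 1 ≤ Real.sin (π * u) :=
      le_of_lt (Real.strictMonoOn_sin
        (by constructor <;> nlinarith [pi_gt_three])
        (by constructor <;> nlinarith [pi_gt_three]) hgt)
    have : (3:ℝ)/4 < Real.sin 1 := by
      have := Real.sin_gt_sub_cube (by norm_num : (0:ℝ) < 1)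
      nlinarith
    nlinarith [sq_nonneg (u - 1/2)]

lemma sin_ge_parabola : ∀ u : ℝ, 0 ≤ u → u ≤ 1 → 3*(u*(1-u)) ≤ Real.sin (π*u) := by
  intro u hu0 hu1
  rcases le_or_gt u (1/2) with h|h
  · exact sin_aux u hu0 h
  · have := sin_aux (1-u) (by linarith) (by linarith)
    have heq : Real.sin (π*(1-u)) = Real.sin (π*u) := by
      rw [mul_sub, mul_one, Real.sin_pi_sub]
    rw [heq] at this
    nlinarith

lemma nonneg_of_concave (a b : ℝ) (hab : a < b) (f : ℝ → ℝ)
    (h1 : Differentiable ℝ f) (h2 : Differentiable ℝ (deriv f))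
    (hdd : ∀ t ∈ Set.Icc a b, deriv (deriv f) t ≤ 0)
    (ha : 0 ≤ f a) (hb : 0 ≤ f b) :
    ∀ t ∈ Set.Icc a b, 0 ≤ f t := by
  have hconc : ConcaveOn ℝ (Set.Icc a b) f := by
    apply concaveOn_of_deriv2_nonpos (convex_Icc a b) h1.continuous.continuousOn
      h1.differentiableOn h2.differentiableOn
    intro t ht
    rw [interior_Icc] at ht
    have : deriv^[2] f t = deriv (deriv f) t := by
      simp [Function.iterate_succ, Function.iterate_one]
    rw [this]
    exact hdd t (Set.mem_Icc_of_Ioo ht)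
  intro t ht
  obtain ⟨ht1, ht2⟩ := ht
  have hba : (0:ℝ) < b - a := by linarith
  have hl0 : 0 ≤ (b - t) / (b - a) := by apply div_nonneg <;> linarith
  have hm0 : 0 ≤ (t - a) / (b - a) := by apply div_nonneg <;> linarith
  have hsum : (b - t) / (b - a) + (t - a) / (b - a) = 1 := by field_simp; ring
  have hcc := hconc.2 (Set.left_mem_Icc.mpr hab.le) (Set.right_mem_Icc.mpr hab.le)
    hl0 hm0 hsum
  simp only [smul_eq_mul] at hcc
  have harg : (b - t) / (b - a) * a + (t - a) / (b - a) * b = t := by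
    field_simp; ring
  rw [harg] at hcc
  nlinarith [mul_nonneg hl0 ha, mul_nonneg hm0 hb]

noncomputable def cseq (h : ℝ) : ℕ → ℝ
  | 0 => 0
  | m+1 => (if 1 ≤ m then h^4/(6*π^2) else 0) + (h^2/π^2) * cseq h m

lemma cseq_nonneg (h : ℝ) : ∀ m, 0 ≤ cseq h m := by
  intro m; induction m with
  | zero => simp [cseq]
  | succ m ih =>
    rw [cseq]
    have h1 : (0:ℝ) ≤ (if 1 ≤ m then h^4/(6*π^2) else 0) := by
      split <;> positivity
    have h2 : (0:ℝ) ≤ (h^2/π^2) * cseq h m := by positivity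
    linarith

lemma cseq_le (h : ℝ) : ∀ m, cseq h m ≤ (2/(3*π^3))*h^4 * ∑ j ∈ Finset.range (m-1), (h^2/π^2)^j := by
  intro m; induction m with
  | zero => simp [cseq]
  | succ m ih =>
    rw [cseq]
    match m, ih with
    | 0, _ => simp [cseq]
    | mm+1, ih =>
      have hgs : ∑ j ∈ Finset.range (mm+1), (h^2/π^2)^j
          = (h^2/π^2) * ∑ j ∈ Finset.range mm, (h^2/π^2)^j + 1 := geom_sum_succ
      have hr : (mm+1+1) - 1 = mm + 1 := rfl
      rw [hr, hgs, if_pos (by omega)]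
      have hπ : π ≤ 4 := by nlinarith [pi_lt_d2]
      have h4 : (0:ℝ) ≤ h^4 := by positivity
      have h1 : h^4/(6*π^2) ≤ (2/(3*π^3))*h^4 := by
        rw [div_le_iff₀ (by positivity)]
        have he : (2/(3*π^3))*h^4*(6*π^2) = 4/π * h^4 := by
          field_simp; ring
        rw [he]
        have : (1:ℝ) ≤ 4/π := by
          rw [le_div_iff₀ pi_pos]; linarith
        nlinarith
      have h2 : (h^2/π^2) * cseq h (mm+1) ≤ (h^2/π^2) * ((2/(3*π^3))*h^4 * ∑ j ∈ Finset.range mm, (h^2/π^2)^j) := by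
        apply mul_le_mul_of_nonneg_left _ (by positivity)
        simpa using ih
      calc h^4/(6*π^2) + (h^2/π^2) * cseq h (mm+1)
          ≤ (2/(3*π^3))*h^4 + (h^2/π^2) * ((2/(3*π^3))*h^4 * ∑ j ∈ Finset.range mm, (h^2/π^2)^j) := by
            linarith
        _ = (2/(3*π^3))*h^4 * ((h^2/π^2) * ∑ j ∈ Finset.range mm, (h^2/π^2)^j + 1) := by ring

lemma geom_split (r : ℝ) (m : ℕ) :
    ∑ l ∈ Finset.range (m+1), r^l
      = 1 + (if 1 ≤ m then r else 0) + r^2 * ∑ j ∈ Finset.range (m-1), r^j := by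
  induction m with
  | zero => simp
  | succ m ih =>
    match m, ih with
    | 0, _ => simp [Finset.sum_range_succ]
    | mm+1, ih =>
      rw [Finset.sum_range_succ, ih]
      have h1 : (mm+1+1)-1 = (mm+1-1)+1 := rfl
      rw [h1, Finset.sum_range_succ]
      have h2 : (mm + 1 - 1 : ℕ) = mm := rfl
      rw [h2, if_pos (by omega), if_pos (by omega)]
      ring

lemma HD_sin (Q : Polynomial ℝ) (K cc dd : ℝ) (t : ℝ) :
    HasDerivAt (fun s => Q.eval s + K*Real.sin (cc*s+dd))
      (Q.derivative.eval t + (K*cc)*Real.cos (cc*t+dd)) t := by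
  have h1 : HasDerivAt (fun s : ℝ => Q.eval s) (Q.derivative.eval t) t := Q.hasDerivAt t
  have haff : HasDerivAt (fun s : ℝ => cc*s+dd) cc t := by
    simpa using ((hasDerivAt_id t).const_mul cc).add_const dd
  have h2 : HasDerivAt (fun s : ℝ => Real.sin (cc*s+dd)) (Real.cos (cc*t+dd) * cc) t :=
    haff.sin
  have : HasDerivAt (fun s => Q.eval s + K*Real.sin (cc*s+dd)) _ t := h1.add (h2.const_mul K)
  convert this using 1
  ring

lemma HD_cos (Q : Polynomial ℝ) (K cc dd : ℝ) (t : ℝ) :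
    HasDerivAt (fun s => Q.eval s + K*Real.cos (cc*s+dd))
      (Q.derivative.eval t + (-(K*cc))*Real.sin (cc*t+dd)) t := by
  have h1 : HasDerivAt (fun s : ℝ => Q.eval s) (Q.derivative.eval t) t := Q.hasDerivAt t
  have haff : HasDerivAt (fun s : ℝ => cc*s+dd) cc t := by
    simpa using ((hasDerivAt_id t).const_mul cc).add_const dd
  have h2 : HasDerivAt (fun s : ℝ => Real.cos (cc*s+dd)) (-Real.sin (cc*t+dd) * cc) t :=
    haff.cos
  have : HasDerivAt (fun s => Q.eval s + K*Real.cos (cc*s+dd)) _ t := h1.add (h2.const_mul K)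
  convert this using 1
  ring

lemma D_sin (Q : Polynomial ℝ) (K cc dd : ℝ) :
    deriv (fun s => Q.eval s + K*Real.sin (cc*s+dd))
      = fun t => Q.derivative.eval t + (K*cc)*Real.cos (cc*t+dd) := by
  funext t; exact (HD_sin Q K cc dd t).deriv

lemma D_cos (Q : Polynomial ℝ) (K cc dd : ℝ) :
    deriv (fun s => Q.eval s + K*Real.cos (cc*s+dd))
      = fun t => Q.derivative.eval t + (-(K*cc))*Real.sin (cc*t+dd) := by
  funext t; exact (HD_cos Q K cc dd t).deriv

/-- comparison principle for the sin-polynomial shape -/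
lemma shape_compare (a b : ℝ) (hab : a < b) (Q : Polynomial ℝ) (K cc dd : ℝ)
    (hdd2 : ∀ t ∈ Set.Icc a b,
      (Q.derivative.derivative.eval t + (-(K*cc*cc))*Real.sin (cc*t+dd)) ≤ 0)
    (hA : 0 ≤ Q.eval a + K*Real.sin (cc*a+dd))
    (hB : 0 ≤ Q.eval b + K*Real.sin (cc*b+dd)) :
    ∀ t ∈ Set.Icc a b, 0 ≤ Q.eval t + K*Real.sin (cc*t+dd) := by
  apply nonneg_of_concave a b hab _ _ _ _ hA hB
  · exact fun t => (HD_sin Q K cc dd t).differentiableAt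
  · rw [D_sin]
    exact fun t => (HD_cos Q.derivative (K*cc) cc dd t).differentiableAt
  · intro t ht
    rw [D_sin, D_cos]
    have h := hdd2 t ht
    have e : -(K*cc)*cc = -(K*cc*cc) := by ring
    simp only [e]
    linarith [h]

lemma step_core (a b : ℝ) (hab : a < b) (B e c : ℝ) (hc : 0 ≤ c) (S : Polynomial ℝ)
    (cc dd : ℝ) (hsa : Real.sin (cc*a+dd) = 0) (hsb : Real.sin (cc*b+dd) = 0)
    (hbound : ∀ t ∈ Set.Icc a b,
      |S.derivative.derivative.eval t| ≤ B*e + (B*c)*(cc*cc)*Real.sin (cc*t+dd))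
    (hea : |S.eval a| ≤ B) (heb : |S.eval b| ≤ B) :
    ∀ t ∈ Set.Icc a b,
      |S.eval t| ≤ B + (B*e/2)*((t-a)*(b-t)) + (B*c)*Real.sin (cc*t+dd) := by
  set K2 : ℝ := B*e/2 with hK2
  set Qq : Polynomial ℝ := C (-K2) * X^2 + C (K2*(a+b)) * X + C (B - K2*a*b) with hQq
  have hQqeval : ∀ t : ℝ, Qq.eval t = B + K2*((t-a)*(b-t)) := by
    intro t; simp [hQq]; ring
  have hQqd2 : Qq.derivative.derivative = C (-(2*K2)) := by
    simp [hQq, derivative_C_mul, derivative_X_pow]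
    ring
    simp [map_ofNat]
  intro t ht
  have key : ∀ S' : Polynomial ℝ, (∀ s ∈ Set.Icc a b,
        -(B*e + (B*c)*(cc*cc)*Real.sin (cc*s+dd)) ≤ S'.derivative.derivative.eval s) →
      |S'.eval a| ≤ B → |S'.eval b| ≤ B →
      0 ≤ (Qq - S').eval t + (B*c)*Real.sin (cc*t+dd) := by
    intro S' hb2 ha' hb'
    apply shape_compare a b hab (Qq - S') (B*c) cc dd _ _ _ t ht
    · intro s hs
      have h2 : (Qq - S').derivative.derivative.eval s
          = -(2*K2) - S'.derivative.derivative.eval s := by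
        simp [derivative_sub, hQqd2]
      rw [h2]
      have h3 := hb2 s hs
      have he : (2:ℝ)*K2 = B*e := by rw [hK2]; ring
      linarith [h3]
    · have h4 : (Qq - S').eval a = B - S'.eval a := by
        simp only [eval_sub, hQqeval a]; ring
      rw [h4, hsa]
      linarith [(abs_le.1 ha').2]
    · have h4 : (Qq - S').eval b = B - S'.eval b := by
        simp only [eval_sub, hQqeval b]; ring
      rw [h4, hsb]
      linarith [(abs_le.1 hb').2]
  have h1 := key S (by
      intro s hs
      linarith [(abs_le.1 (hbound s hs)).1])
    hea heb
  have h2 := key (-S) (by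
      intro s hs
      have hneg : (-S).derivative.derivative.eval s = -(S.derivative.derivative.eval s) := by simp
      rw [hneg]
      linarith [(abs_le.1 (hbound s hs)).2])
    (by simpa using hea) (by simpa using heb)
  have e1 : (Qq - S).eval t = B + K2*((t-a)*(b-t)) - S.eval t := by
    simp only [eval_sub, hQqeval t]
  have e2 : (Qq - (-S)).eval t = B + K2*((t-a)*(b-t)) + S.eval t := by
    simp only [eval_sub, eval_neg, hQqeval t]; ring
  rw [e1] at h1; rw [e2] at h2
  rw [abs_le]
  constructor <;> [linarith; linarith]

set_option maxHeartbeats 2000000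

lemma iter_deriv_deriv (R : Polynomial ℝ) (n : ℕ) :
    ((Polynomial.derivative)^[n] R).derivative.derivative = (Polynomial.derivative)^[n+2] R := by
  rw [Function.iterate_succ_apply', Function.iterate_succ_apply']

lemma poly_bound (a b : ℝ) (hab : a < b) (p k : ℕ) (hk : k ≤ p)
    (R : Polynomial ℝ) (hdeg : R.natDegree ≤ 2*p+1) (B : ℝ) (hB : 0 ≤ B)
    (hval : ∀ l, k ≤ l → l ≤ p →
      |((Polynomial.derivative)^[2*l] R).eval a| ≤ B ∧
      |((Polynomial.derivative)^[2*l] R).eval b| ≤ B) :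
    ∀ t ∈ Set.Icc a b, |((Polynomial.derivative)^[2*k] R).eval t|
      ≤ B * ((2*π/3) * ∑ l ∈ Finset.range (p-k+1), ((b-a)/π)^(2*l)) := by
  set h : ℝ := b - a with hh
  have hh0 : 0 < h := by rw [hh]; linarith
  set cc : ℝ := π/h with hcc
  set dd : ℝ := -(π*a/h) with hdd
  have hcc0 : 0 < cc := by rw [hcc]; positivity
  clear_value h cc dd
  have hsa : Real.sin (cc*a+dd) = 0 := by
    have : cc*a+dd = 0 := by rw [hcc, hdd]; field_simp; ring
    rw [this, Real.sin_zero]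
  have hsb : Real.sin (cc*b+dd) = 0 := by
    have : cc*b+dd = π := by rw [hcc, hdd]; field_simp; rw [hh]; ring
    rw [this, Real.sin_pi]
  have harg : ∀ t : ℝ, cc*t+dd = π * ((t-a)/h) := by
    intro t; rw [hcc, hdd]; field_simp; ring
  have hs0 : ∀ t ∈ Set.Icc a b, 0 ≤ Real.sin (cc*t+dd) := by
    intro t ⟨h1, h2⟩
    rw [harg]
    apply Real.sin_nonneg_of_nonneg_of_le_pi
    · exact mul_nonneg pi_pos.le (div_nonneg (by linarith) hh0.le)
    · rw [mul_comm]
      apply mul_le_of_le_one_left pi_pos.le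
      rw [div_le_one hh0]; linarith
  have hs1 : ∀ t : ℝ, Real.sin (cc*t+dd) ≤ 1 := fun t => Real.sin_le_one _
  have hspar : ∀ t ∈ Set.Icc a b, 3*((t-a)*(b-t))/h^2 ≤ Real.sin (cc*t+dd) := by
    intro t ⟨h1, h2⟩
    rw [harg]
    have := sin_ge_parabola ((t-a)/h) (div_nonneg (by linarith) hh0.le) (by rw [div_le_one hh0]; linarith)
    calc 3*((t-a)*(b-t))/h^2 = 3*(((t-a)/h)*(1-(t-a)/h)) := by
          field_simp; rw [hh]; ring
      _ ≤ _ := this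
  -- main induction
  have hclaim : ∀ m, m ≤ p - k → ∀ t ∈ Set.Icc a b,
      |((Polynomial.derivative)^[2*(p-m)] R).eval t|
        ≤ B + (B*(if 1 ≤ m then (1:ℝ) else 0)/2)*((t-a)*(b-t))
          + (B*(cseq h m))*Real.sin (cc*t+dd) := by
    intro m
    induction m with
    | zero =>
      intro _ t ht
      have h0 : cseq h 0 = 0 := rfl
      simp only [h0, Nat.sub_zero]
      have := step_core a b hab B 0 0 le_rfl ((Polynomial.derivative)^[2*p] R) cc dd hsa hsb
        (by
          intro s hs
          rw [iter_deriv_deriv]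
          have hz : (Polynomial.derivative)^[2*p+2] R = 0 :=
            Polynomial.iterate_derivative_eq_zero (by omega)
          rw [hz]
          simp)
        (hval p hk le_rfl).1 (hval p hk le_rfl).2 t ht
      simpa using this
    | succ m ih =>
      intro hm1 t ht
      have hmle : m ≤ p - k := by omega
      have hidx : 2*(p-(m+1)) + 2 = 2*(p-m) := by omega
      have hkl : k ≤ p-(m+1) := by omega
      have hlp : p-(m+1) ≤ p := by omega
      have hcnn := cseq_nonneg h (m+1)
      have := step_core a b hab B 1 (cseq h (m+1)) hcnn
        ((Polynomial.derivative)^[2*(p-(m+1))] R) cc dd hsa hsb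
        (by
          intro s hs
          rw [iter_deriv_deriv, hidx]
          have hIH := ih hmle s hs
          have hccsq : cc*cc = π^2/h^2 := by rw [hcc]; field_simp
          have hrec : cseq h (m+1) = (if 1 ≤ m then h^4/(6*π^2) else 0) + (h^2/π^2) * cseq h m := rfl
          have hkey : (B*(if 1 ≤ m then (1:ℝ) else 0)/2)*((s-a)*(b-s))
              + (B*(cseq h m))*Real.sin (cc*s+dd)
              ≤ (B*(cseq h (m+1)))*(cc*cc)*Real.sin (cc*s+dd) := by
            have hexp : (B*(cseq h (m+1)))*(cc*cc)
                = B*(if 1 ≤ m then h^2/6 else 0) + B*(cseq h m) := by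
              rw [hrec, hccsq]
              have hπ0 : π ≠ 0 := ne_of_gt pi_pos
              have hh0' : h ≠ 0 := ne_of_gt hh0
              split <;> field_simp <;> ring
            rw [hexp, add_mul]
            have hterm2 : (B*(cseq h m))*Real.sin (cc*s+dd)
                ≤ B*(cseq h m)*Real.sin (cc*s+dd) := le_rfl
            have hterm1 : (B*(if 1 ≤ m then (1:ℝ) else 0)/2)*((s-a)*(b-s))
                ≤ B*(if 1 ≤ m then h^2/6 else 0)*Real.sin (cc*s+dd) := by
              split
              · have hp := hspar s hs
                have hw : (s-a)*(b-s) ≤ (h^2/3)*Real.sin (cc*s+dd) := by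
                  rw [div_le_iff₀ (by positivity : (0:ℝ) < h^2)] at hp
                  nlinarith [hp]
                calc (B*1/2)*((s-a)*(b-s)) ≤ (B*1/2)*((h^2/3)*Real.sin (cc*s+dd)) := by
                      apply mul_le_mul_of_nonneg_left hw (by positivity)
                  _ = B*(h^2/6)*Real.sin (cc*s+dd) := by ring
              · simp
            linarith
          calc |((Polynomial.derivative)^[2*(p-m)] R).eval s|
              ≤ B + (B*(if 1 ≤ m then (1:ℝ) else 0)/2)*((s-a)*(b-s))
                + (B*(cseq h m))*Real.sin (cc*s+dd) := hIH
            _ ≤ B*1 + (B*(cseq h (m+1)))*(cc*cc)*Real.sin (cc*s+dd) := by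
                rw [mul_one]; linarith)
        (hval (p-(m+1)) hkl hlp).1 (hval (p-(m+1)) hkl hlp).2 t ht
      simpa [if_pos (by omega : 1 ≤ m+1)] using this
  -- conclude
  intro t ht
  have hfin := hclaim (p-k) le_rfl t ht
  have hpk : p - (p-k) = k := by omega
  rw [hpk] at hfin
  obtain ⟨ht1, ht2⟩ := ht
  -- bound the shape by the geometric sum
  have hw8 : (t-a)*(b-t) ≤ h^2/4 := by nlinarith [sq_nonneg ((t-a)-(b-t))]
  have hw0 : 0 ≤ (t-a)*(b-t) := by nlinarith
  set r : ℝ := (h/π)^2 with hr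
  have hsum : ∑ l ∈ Finset.range (p-k+1), (h/π)^(2*l)
      = 1 + (if 1 ≤ p-k then r else 0) + r^2 * ∑ j ∈ Finset.range (p-k-1), r^j := by
    rw [← geom_split r (p-k)]
    apply Finset.sum_congr rfl
    intro l _
    rw [hr, ← pow_mul, mul_comm 2 l]
  have hralt : r = h^2/π^2 := by rw [hr]; field_simp
  have hT0 : 0 ≤ ∑ j ∈ Finset.range (p-k-1), r^j := by
    apply Finset.sum_nonneg; intro j _; positivity
  have hcle := cseq_le h (p-k)
  rw [← hralt] at hcle
  have hπ16 : 3*π ≤ 16 := by nlinarith [pi_lt_d2]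
  have hsin0 := hs0 t ⟨ht1, ht2⟩
  have hsin1 := hs1 t
  have hcnn := cseq_nonneg h (p-k)
  rw [hsum]
  have hr2 : (2*π/3) * r^2 = (2/(3*π^3))*h^4 * (1:ℝ) := by
    rw [hr]; field_simp
  -- piecewise comparison
  have goal2 : B + (B*(if 1 ≤ p-k then (1:ℝ) else 0)/2)*((t-a)*(b-t))
      + (B*(cseq h (p-k)))*Real.sin (cc*t+dd)
      ≤ B * ((2*π/3) * (1 + (if 1 ≤ p-k then r else 0) + r^2 * ∑ j ∈ Finset.range (p-k-1), r^j)) := by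
    have c1 : B ≤ B*(2*π/3) := by nlinarith [pi_gt_three]
    have c2 : (B*(if 1 ≤ p-k then (1:ℝ) else 0)/2)*((t-a)*(b-t))
        ≤ B*(2*π/3)*(if 1 ≤ p-k then r else 0) := by
      split
      · rw [hralt]
        have e1 : B*(2*π/3)*(h^2/π^2) = B*h^2*(2/(3*π)) := by
          field_simp
        have e2 : (1:ℝ)/8 ≤ 2/(3*π) := by
          rw [div_le_div_iff₀ (by norm_num) (by positivity)]
          linarith
        have h2 : B*1/2*((t-a)*(b-t)) ≤ B*h^2*(1/8) := by
          nlinarith [mul_le_mul_of_nonneg_left hw8 (by linarith : (0:ℝ) ≤ B/2)]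
        have h3 : B*h^2*(1/8) ≤ B*h^2*(2/(3*π)) :=
          mul_le_mul_of_nonneg_left e2 (by positivity)
        rw [e1]
        exact h2.trans h3
      · simp
    have c3 : (B*(cseq h (p-k)))*Real.sin (cc*t+dd)
        ≤ B*(2*π/3)*(r^2 * ∑ j ∈ Finset.range (p-k-1), r^j) := by
      calc (B*(cseq h (p-k)))*Real.sin (cc*t+dd) ≤ (B*(cseq h (p-k)))*1 := by
            apply mul_le_mul_of_nonneg_left hsin1 (by positivity)
        _ = B*(cseq h (p-k)) := by ring
        _ ≤ B*((2/(3*π^3))*h^4 * ∑ j ∈ Finset.range (p-k-1), r^j) := by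
            apply mul_le_mul_of_nonneg_left hcle hB
        _ = B*(2*π/3)*(r^2 * ∑ j ∈ Finset.range (p-k-1), r^j) := by
            rw [hr]; field_simp
    calc B + (B*(if 1 ≤ p-k then (1:ℝ) else 0)/2)*((t-a)*(b-t))
        + (B*(cseq h (p-k)))*Real.sin (cc*t+dd)
        ≤ B*(2*π/3) + B*(2*π/3)*(if 1 ≤ p-k then r else 0)
          + B*(2*π/3)*(r^2 * ∑ j ∈ Finset.range (p-k-1), r^j) := by linarith
      _ = B * ((2*π/3) * (1 + (if 1 ≤ p-k then r else 0)
          + r^2 * ∑ j ∈ Finset.range (p-k-1), r^j)) := by ring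
  linarith [hfin]

lemma iteratedDeriv_polyEval (P : Polynomial ℝ) (n : ℕ) :
    iteratedDeriv n (fun t => P.eval t) = fun t => ((Polynomial.derivative)^[n] P).eval t := by
  induction n with
  | zero => simp
  | succ m ih =>
    rw [iteratedDeriv_succ, ih]; funext t
    simp [Function.iterate_succ_apply', Polynomial.deriv]

lemma iter_derivative_sub (P Q : Polynomial ℝ) (n : ℕ) :
    (Polynomial.derivative)^[n] (P - Q)
      = (Polynomial.derivative)^[n] P - (Polynomial.derivative)^[n] Q := by
  induction n with
  | zero => simp
  | succ m ih => simp [Function.iterate_succ_apply', ih]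

lemma x_mono (N : ℕ) (x : ℕ → ℝ) (hx : ∀ n < N, x n < x (n+1)) :
    ∀ i j, i ≤ j → j ≤ N → x i ≤ x j := by
  intro i j hij hjN
  induction j with
  | zero =>
    have : i = 0 := by omega
    simp [this]
  | succ j ih =>
    rcases Nat.eq_or_lt_of_le hij with h|h
    · rw [h]
    · have h1 : x i ≤ x j := ih (by omega) (by omega)
      have h2 : x j < x (j+1) := hx j (by omega)
      linarith

lemma exists_piece (N : ℕ) (hN : 1 ≤ N) (x : ℕ → ℝ) (hx : ∀ n < N, x n < x (n+1)) :
    ∀ t, x 0 ≤ t → t ≤ x N → ∃ n, 1 ≤ n ∧ n ≤ N ∧ x (n-1) ≤ t ∧ t ≤ x n := by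
  induction N with
  | zero => omega
  | succ N ih =>
    intro t h0 h1
    by_cases hN0 : N = 0
    · subst hN0
      exact ⟨1, le_rfl, le_rfl, h0, h1⟩
    · rcases le_or_gt t (x N) with h|h
      · obtain ⟨n, hn1, hn2, hn3, hn4⟩ :=
          ih (by omega) (fun n hn => hx n (by omega)) t h0 h
        exact ⟨n, hn1, by omega, hn3, hn4⟩
      · exact ⟨N+1, by omega, le_rfl, by simpa using h.le, h1⟩

lemma func_eq_deriv (x0 xN : ℝ) (hx : x0 < xN) (f : ℝ → ℝ) (M : ℕ)
    (hsm : ContDiffOn ℝ M f (Set.Icc x0 xN))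
    (A Bc α : ℝ) (P : Polynomial ℝ)
    (hmaps : Set.MapsTo (fun t => A*t+Bc) (Set.Icc x0 xN) (Set.Icc x0 xN))
    (heq : ∀ t ∈ Set.Icc x0 xN, f (A*t+Bc) = α * f t + P.eval t) :
    ∀ m, m ≤ M → ∀ t ∈ Set.Icc x0 xN,
      A^m * iteratedDerivWithin m f (Set.Icc x0 xN) (A*t+Bc)
        = α * iteratedDerivWithin m f (Set.Icc x0 xN) t
          + ((Polynomial.derivative)^[m] P).eval t := by
  intro m
  induction m with
  | zero =>
    intro _ t ht
    simpa using heq t ht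
  | succ m ihm =>
    intro hm1 t ht
    have hud := uniqueDiffOn_Icc hx
    set S := Set.Icc x0 xN with hS
    have hmM : (m : WithTop ℕ∞) < (M : ℕ) := by exact_mod_cast (by omega : m < M)
    have hdiff : DifferentiableOn ℝ (iteratedDerivWithin m f S) S :=
      hsm.differentiableOn_iteratedDerivWithin hmM hud
    have hz : A*t+Bc ∈ S := hmaps ht
    have h1 : HasDerivWithinAt (iteratedDerivWithin m f S)
        (iteratedDerivWithin (m+1) f S (A*t+Bc)) S (A*t+Bc) := by
      have := (hdiff _ hz).hasDerivWithinAt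
      rwa [← iteratedDerivWithin_succ] at this
    have haff : HasDerivWithinAt (fun s => A*s+Bc) A S t := by
      simpa using (((hasDerivAt_id t).const_mul A).add_const Bc).hasDerivWithinAt
    have hcomp : HasDerivWithinAt (fun s => iteratedDerivWithin m f S (A*s+Bc))
        (iteratedDerivWithin (m+1) f S (A*t+Bc) * A) S t :=
      by have := h1.comp t haff hmaps; exact this
    have hL : HasDerivWithinAt (fun s => A^m * iteratedDerivWithin m f S (A*s+Bc))
        (A^m * (iteratedDerivWithin (m+1) f S (A*t+Bc) * A)) S t :=
      hcomp.const_mul (A^m)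
    have hRd : HasDerivWithinAt (iteratedDerivWithin m f S)
        (iteratedDerivWithin (m+1) f S t) S t := by
      have := (hdiff _ ht).hasDerivWithinAt
      rwa [← iteratedDerivWithin_succ] at this
    have hR : HasDerivWithinAt
        (fun s => α * iteratedDerivWithin m f S s + ((Polynomial.derivative)^[m] P).eval s)
        (α * iteratedDerivWithin (m+1) f S t + ((Polynomial.derivative)^[m+1] P).eval t) S t := by
      apply (hRd.const_mul α).add
      have h5 := (((Polynomial.derivative)^[m] P).hasDerivAt t).hasDerivWithinAt (s := S)
      rw [Function.iterate_succ_apply']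
      exact h5
    have hEq : ∀ s ∈ S, (fun s => A^m * iteratedDerivWithin m f S (A*s+Bc)) s
        = (fun s => α * iteratedDerivWithin m f S s + ((Polynomial.derivative)^[m] P).eval s) s :=
      fun s hs => ihm (by omega) s hs
    have hL' : HasDerivWithinAt
        (fun s => α * iteratedDerivWithin m f S s + ((Polynomial.derivative)^[m] P).eval s)
        (A^m * (iteratedDerivWithin (m+1) f S (A*t+Bc) * A)) S t :=
      hL.congr (fun s hs => (hEq s hs).symm) (hEq t ht).symm
    have e1 := hL'.derivWithin (hud t ht)
    have e2 := hR.derivWithin (hud t ht)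
    have e3 : A^m * (iteratedDerivWithin (m+1) f S (A*t+Bc) * A)
        = α * iteratedDerivWithin (m+1) f S t + ((Polynomial.derivative)^[m+1] P).eval t := by
      rw [← e1, ← e2]
    calc A^(m+1) * iteratedDerivWithin (m+1) f S (A*t+Bc)
        = A^m * (iteratedDerivWithin (m+1) f S (A*t+Bc) * A) := by ring
      _ = _ := e3
/-- Continuous dependence of the even-order derivatives of the Lidstone FIF on
the scaling vector: for `1 ≤ k ≤ p`,
`‖ℓ_{α'}^(2k) - ℓ_{α''}^(2k)‖_∞ ≤ (|α' - α''|_∞ / (μ^(2k) - |α'|_∞)) (‖ℓ_{α''}^(2k)‖_∞ + M_{2k,2p})`,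
where `μ = min_n a n`, `M_{2k,2p} = (2ρπ/3) ∑_{l=0}^{p-k} ((x N - x 0)/π)^(2l)` and
`ρ = max_{0 ≤ k ≤ p} max {|y 0 k|, |y N k|}`. -/
theorem lidstone_FIF_derivative_scaling_continuity
    (p N : ℕ) (hp : 1 ≤ p) (hN : 1 ≤ N)
    (x : ℕ → ℝ) (hx : ∀ n < N, x n < x (n + 1))
    (y : ℕ → ℕ → ℝ)
    (k : ℕ) (hk1 : 1 ≤ k) (hk2 : k ≤ p)
    (L : ℕ → ℝ → ℝ)
    (hL : ∀ n t, L n t = ((x n - x (n - 1)) / (x N - x 0)) * t +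
      (x N * x (n - 1) - x 0 * x n) / (x N - x 0))
    (q : ℕ → ℝ → ℝ → ℝ)
    (hq : ∀ n, 1 ≤ n → n ≤ N → ∀ β : ℝ,
      (∃ P : Polynomial ℝ, P.natDegree ≤ 2 * p + 1 ∧ ∀ t, q n β t = P.eval t) ∧
      ∀ l ≤ p,
        iteratedDeriv (2 * l) (q n β) (x 0) =
          ((x n - x (n - 1)) / (x N - x 0)) ^ (2 * l) * y (n - 1) l - β * y 0 l ∧
        iteratedDeriv (2 * l) (q n β) (x N) =
          ((x n - x (n - 1)) / (x N - x 0)) ^ (2 * l) * y n l - β * y N l)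
    (α' α'' : ℕ → ℝ)
    (hα' : ∀ n, 1 ≤ n → n ≤ N →
      |α' n| < ((x n - x (n - 1)) / (x N - x 0)) ^ (2 * p))
    (hα'' : ∀ n, 1 ≤ n → n ≤ N →
      |α'' n| < ((x n - x (n - 1)) / (x N - x 0)) ^ (2 * p))
    (μ ρ dα Aα : ℝ)
    (hμ : μ = (Finset.Icc 1 N).inf' (Finset.nonempty_Icc.mpr hN)
      (fun n => (x n - x (n - 1)) / (x N - x 0)))
    (hρ : ρ = (Finset.range (p + 1)).sup'
      (Finset.nonempty_range_iff.mpr p.succ_ne_zero)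
      (fun j => max |y 0 j| |y N j|))
    (hdα : dα = (Finset.Icc 1 N).sup' (Finset.nonempty_Icc.mpr hN)
      (fun n => |α' n - α'' n|))
    (hAα : Aα = (Finset.Icc 1 N).sup' (Finset.nonempty_Icc.mpr hN)
      (fun n => |α' n|))
    (hAμ : Aα < μ ^ (2 * k))
    (ℓ' ℓ'' : ℝ → ℝ)
    (hℓ'smooth : ContDiffOn ℝ (2 * p) ℓ' (Set.Icc (x 0) (x N)))
    (hℓ''smooth : ContDiffOn ℝ (2 * p) ℓ'' (Set.Icc (x 0) (x N)))
    (hℓ' : ∀ n, 1 ≤ n → n ≤ N → ∀ t ∈ Set.Icc (x 0) (x N),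
      ℓ' (L n t) = α' n * ℓ' t + q n (α' n) t)
    (hℓ'' : ∀ n, 1 ≤ n → n ≤ N → ∀ t ∈ Set.Icc (x 0) (x N),
      ℓ'' (L n t) = α'' n * ℓ'' t + q n (α'' n) t) :
    sSup ((fun t => |iteratedDerivWithin (2 * k) ℓ' (Set.Icc (x 0) (x N)) t -
        iteratedDerivWithin (2 * k) ℓ'' (Set.Icc (x 0) (x N)) t|) ''
        Set.Icc (x 0) (x N)) ≤
      (dα / (μ ^ (2 * k) - Aα)) *
        (sSup ((fun t => |iteratedDerivWithin (2 * k) ℓ'' (Set.Icc (x 0) (x N)) t|) ''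
            Set.Icc (x 0) (x N)) +
          (2 * ρ * Real.pi / 3) *
            ∑ l ∈ Finset.range (p - k + 1), ((x N - x 0) / Real.pi) ^ (2 * l)) := by
  classical
  set S : Set ℝ := Set.Icc (x 0) (x N) with hSdef
  -- basic facts
  have hx0N : x 0 < x N := by
    have h1 : x (N-1) < x (N-1+1) := hx (N-1) (by omega)
    have h2 : x 0 ≤ x (N-1) := x_mono N x hx 0 (N-1) (by omega) (by omega)
    have h3 : N - 1 + 1 = N := by omega
    rw [h3] at h1; linarith
  have hud := uniqueDiffOn_Icc hx0N
  have hh0 : (0:ℝ) < x N - x 0 := by linarith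
  have hsm' : ContDiffOn ℝ ((2*p : ℕ) : WithTop ℕ∞) ℓ' S := by exact_mod_cast hℓ'smooth
  have hsm'' : ContDiffOn ℝ ((2*p : ℕ) : WithTop ℕ∞) ℓ'' S := by exact_mod_cast hℓ''smooth
  have hkp : ((2*k : ℕ) : WithTop ℕ∞) ≤ ((2*p : ℕ) : WithTop ℕ∞) := by
    have h9 : (2*k : ℕ) ≤ (2*p : ℕ) := by omega
    exact_mod_cast h9
  set D' : ℝ → ℝ := iteratedDerivWithin (2 * k) ℓ' S with hD'def
  set D'' : ℝ → ℝ := iteratedDerivWithin (2 * k) ℓ'' S with hD''def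
  have hcont' : ContinuousOn D' S := hsm'.continuousOn_iteratedDerivWithin hkp hud
  have hcont'' : ContinuousOn D'' S := hsm''.continuousOn_iteratedDerivWithin hkp hud
  have hGcont : ContinuousOn (fun t => |D' t - D'' t|) S :=
    (hcont'.sub hcont'').abs
  have hSne : S.Nonempty := Set.nonempty_Icc.mpr hx0N.le
  obtain ⟨ts, htsS, hmax⟩ := isCompact_Icc.exists_isMaxOn hSne hGcont
  have hLHS : sSup ((fun t => |D' t - D'' t|) '' S) = |D' ts - D'' ts| := by
    apply IsGreatest.csSup_eq
    constructor
    · exact Set.mem_image_of_mem _ htsS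
    · rintro v ⟨u, hu, rfl⟩
      exact hmax hu
  set T : ℝ := |D' ts - D'' ts| with hTdef
  have hT0 : 0 ≤ T := abs_nonneg _
  set Sd : ℝ := sSup ((fun t => |D'' t|) '' S) with hSd
  have hSdub : ∀ s ∈ S, |D'' s| ≤ Sd := by
    intro s hs
    exact le_csSup (isCompact_Icc.bddAbove_image hcont''.abs) (Set.mem_image_of_mem _ hs)
  -- find the subinterval containing ts
  obtain ⟨n, hn1, hnN, hts1, hts2⟩ := exists_piece N hN x hx ts htsS.1 htsS.2
  set A : ℝ := (x n - x (n - 1)) / (x N - x 0) with hAdef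
  set Bc : ℝ := (x N * x (n - 1) - x 0 * x n) / (x N - x 0) with hBcdef
  have hxn : x (n-1) < x n := by
    have := hx (n-1) (by omega)
    have h3 : n - 1 + 1 = n := by omega
    rwa [h3] at this
  have hApos : 0 < A := by
    rw [hAdef]; apply div_pos (by linarith) hh0
  have hAx0 : A * x 0 + Bc = x (n-1) := by
    rw [hAdef, hBcdef]; field_simp; ring
  have hAxN : A * x N + Bc = x n := by
    rw [hAdef, hBcdef]; field_simp; ring
  have hxl : x 0 ≤ x (n-1) := x_mono N x hx 0 (n-1) (by omega) (by omega)
  have hxr : x n ≤ x N := x_mono N x hx n N hnN le_rfl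
  have hmaps : Set.MapsTo (fun t => A*t+Bc) S S := by
    intro u hu
    obtain ⟨hu1, hu2⟩ := hu
    constructor
    · have h4 : A * x 0 ≤ A * u := by nlinarith
      simp only []
      linarith [hAx0, hxl, h4]
    · have h5 : A * u ≤ A * x N := by nlinarith
      simp only []
      linarith [hAxN, hxr, h5]
  -- the point s with A*s+Bc = ts
  set sp : ℝ := (ts - Bc)/A with hspdef
  have hts : A * sp + Bc = ts := by
    rw [hspdef]; field_simp; ring
  have hspS : sp ∈ S := by
    constructor
    · have h1 : A * x 0 + Bc ≤ A * sp + Bc := by rw [hts, hAx0]; exact hts1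
      have := (mul_le_mul_iff_right₀ hApos).mp (by linarith : A * x 0 ≤ A * sp)
      exact this
    · have h1 : A * sp + Bc ≤ A * x N + Bc := by rw [hts, hAxN]; exact hts2
      have := (mul_le_mul_iff_right₀ hApos).mp (by linarith : A * sp ≤ A * x N)
      exact this
  -- polynomials
  obtain ⟨⟨P', hdegP', hP'⟩, hvals'⟩ := hq n hn1 hnN (α' n)
  obtain ⟨⟨P'', hdegP'', hP''⟩, hvals''⟩ := hq n hn1 hnN (α'' n)
  have hq'fun : q n (α' n) = fun t => P'.eval t := funext hP'
  have hq''fun : q n (α'' n) = fun t => P''.eval t := funext hP''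
  have heq' : ∀ t ∈ S, ℓ' (A*t+Bc) = α' n * ℓ' t + P'.eval t := by
    intro t ht
    have := hℓ' n hn1 hnN t ht
    rwa [hL n t, hP' t] at this
  have heq'' : ∀ t ∈ S, ℓ'' (A*t+Bc) = α'' n * ℓ'' t + P''.eval t := by
    intro t ht
    have := hℓ'' n hn1 hnN t ht
    rwa [hL n t, hP'' t] at this
  have hE1 := func_eq_deriv (x 0) (x N) hx0N ℓ' (2*p) hsm' A Bc (α' n) P' hmaps heq'
    (2*k) (by omega) sp hspS
  have hE2 := func_eq_deriv (x 0) (x N) hx0N ℓ'' (2*p) hsm'' A Bc (α'' n) P'' hmaps heq''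
    (2*k) (by omega) sp hspS
  rw [← hSdef] at hE1 hE2
  set R : Polynomial ℝ := P' - P'' with hRdef
  have hRsub : ∀ t : ℝ, ((Polynomial.derivative)^[2*k] R).eval t
      = ((Polynomial.derivative)^[2*k] P').eval t - ((Polynomial.derivative)^[2*k] P'').eval t := by
    intro t; rw [hRdef, iter_derivative_sub]; simp
  have hkey : A^(2*k) * (D' ts - D'' ts)
      = α' n * (D' sp - D'' sp) + (α' n - α'' n) * D'' sp
        + ((Polynomial.derivative)^[2*k] R).eval sp := by
    rw [← hts, hRsub]
    rw [hD'def, hD''def]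
    linear_combination hE1 - hE2
  -- endpoint data for R
  have hdαnn : 0 ≤ dα := by
    rw [hdα]
    exact le_trans (abs_nonneg (α' 1 - α'' 1))
      (Finset.le_sup' (fun m => |α' m - α'' m|) (Finset.mem_Icc.mpr ⟨le_rfl, hN⟩))
  have hρnn : 0 ≤ ρ := by
    rw [hρ]
    refine le_trans (abs_nonneg (y 0 0)) (le_trans (le_max_left _ _)
      (Finset.le_sup' (fun j => max |y 0 j| |y N j|) ?_))
    exact Finset.mem_range.mpr (by omega)
  have hdαn : |α' n - α'' n| ≤ dα := by
    rw [hdα]; exact Finset.le_sup' (fun m => |α' m - α'' m|) (Finset.mem_Icc.mpr ⟨hn1, hnN⟩)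
  have hAαn : |α' n| ≤ Aα := by
    rw [hAα]; exact Finset.le_sup' (fun m => |α' m|) (Finset.mem_Icc.mpr ⟨hn1, hnN⟩)
  have hAα0 : 0 ≤ Aα := le_trans (abs_nonneg _) hAαn
  have hvalR : ∀ l, k ≤ l → l ≤ p →
      |((Polynomial.derivative)^[2*l] R).eval (x 0)| ≤ dα*ρ ∧
      |((Polynomial.derivative)^[2*l] R).eval (x N)| ≤ dα*ρ := by
    intro l hkl hlp
    have hid' := iteratedDeriv_polyEval P' (2*l)
    have hid'' := iteratedDeriv_polyEval P'' (2*l)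
    have hv' := hvals' l hlp
    have hv'' := hvals'' l hlp
    rw [hq'fun, hid'] at hv'
    rw [hq''fun, hid''] at hv''
    simp only [] at hv' hv''
    have hrl : ∀ t : ℝ, ((Polynomial.derivative)^[2*l] R).eval t
        = ((Polynomial.derivative)^[2*l] P').eval t - ((Polynomial.derivative)^[2*l] P'').eval t := by
      intro t; rw [hRdef, iter_derivative_sub]; simp
    have hy0 : |y 0 l| ≤ ρ := by
      rw [hρ]
      exact le_trans (le_max_left _ _)
        (Finset.le_sup' (fun j => max |y 0 j| |y N j|) (Finset.mem_range.mpr (by omega)))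
    have hyN : |y N l| ≤ ρ := by
      rw [hρ]
      exact le_trans (le_max_right _ _)
        (Finset.le_sup' (fun j => max |y 0 j| |y N j|) (Finset.mem_range.mpr (by omega)))
    constructor
    · rw [hrl, hv'.1, hv''.1]
      have he : ((x n - x (n - 1)) / (x N - x 0)) ^ (2*l) * y (n - 1) l - α' n * y 0 l
          - (((x n - x (n - 1)) / (x N - x 0)) ^ (2*l) * y (n - 1) l - α'' n * y 0 l)
          = -((α' n - α'' n) * y 0 l) := by ring
      rw [he, abs_neg, abs_mul]
      exact mul_le_mul hdαn hy0 (abs_nonneg _) hdαnn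
    · rw [hrl, hv'.2, hv''.2]
      have he : ((x n - x (n - 1)) / (x N - x 0)) ^ (2*l) * y n l - α' n * y N l
          - (((x n - x (n - 1)) / (x N - x 0)) ^ (2*l) * y n l - α'' n * y N l)
          = -((α' n - α'' n) * y N l) := by ring
      rw [he, abs_neg, abs_mul]
      exact mul_le_mul hdαn hyN (abs_nonneg _) hdαnn
  have hdegR : R.natDegree ≤ 2*p+1 :=
    le_trans (Polynomial.natDegree_sub_le P' P'') (max_le hdegP' hdegP'')
  have hRbound := poly_bound (x 0) (x N) hx0N p k hk2 R hdegR (dα*ρ)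
    (mul_nonneg hdαnn hρnn) hvalR sp hspS
  -- combine
  have hGsp : |D' sp - D'' sp| ≤ T := hmax hspS
  have hDsp : |D'' sp| ≤ Sd := hSdub sp hspS
  set Msum : ℝ := ∑ l ∈ Finset.range (p - k + 1), ((x N - x 0) / Real.pi) ^ (2 * l) with hMsum
  have habs : A^(2*k) * T ≤ Aα * T + dα * Sd + (dα*ρ) * ((2*Real.pi/3) * Msum) := by
    have h1 : A^(2*k) * T = |A^(2*k) * (D' ts - D'' ts)| := by
      rw [abs_mul, abs_of_pos (pow_pos hApos _)]
    rw [h1, hkey]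
    calc |α' n * (D' sp - D'' sp) + (α' n - α'' n) * D'' sp
        + ((Polynomial.derivative)^[2*k] R).eval sp|
        ≤ |α' n * (D' sp - D'' sp)| + |(α' n - α'' n) * D'' sp|
          + |((Polynomial.derivative)^[2*k] R).eval sp| := by
          exact le_trans (abs_add_le _ _) (by linarith [abs_add_le (α' n * (D' sp - D'' sp)) ((α' n - α'' n) * D'' sp)])
      _ ≤ Aα * T + dα * Sd + (dα*ρ) * ((2*Real.pi/3) * Msum) := by
          rw [abs_mul, abs_mul]
          have b1 : |α' n| * |D' sp - D'' sp| ≤ Aα * T :=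
            mul_le_mul hAαn hGsp (abs_nonneg _) hAα0
          have b2 : |α' n - α'' n| * |D'' sp| ≤ dα * Sd :=
            mul_le_mul hdαn hDsp (abs_nonneg _) hdαnn
          linarith [hRbound]
  have hμpos : 0 < μ := by
    rw [hμ, Finset.lt_inf'_iff]
    intro m hm
    obtain ⟨hm1, hm2⟩ := Finset.mem_Icc.mp hm
    have hxm : x (m-1) < x m := by
      have := hx (m-1) (by omega)
      have h3 : m - 1 + 1 = m := by omega
      rwa [h3] at this
    exact div_pos (by linarith) hh0
  have hμA' : μ ≤ A := by
    rw [hμ, hAdef]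
    exact Finset.inf'_le _ (Finset.mem_Icc.mpr ⟨hn1, hnN⟩)
  have hμA : μ^(2*k) ≤ A^(2*k) := pow_le_pow_left₀ hμpos.le hμA' _
  have hfinal : μ^(2*k) * T ≤ Aα * T + dα * Sd + (dα*ρ) * ((2*Real.pi/3) * Msum) :=
    le_trans (mul_le_mul_of_nonneg_right hμA hT0) habs
  rw [hLHS]
  rw [div_mul_eq_mul_div, le_div_iff₀ (by linarith : (0:ℝ) < μ^(2*k) - Aα)]
  nlinarith [hfinal]
end

section
/- Fix integers p ≥ 1 and N ≥ 1, a partition x_0 < x_1 < ⋯ < x_N, data y_{n,2k} ∈ ℝ (0 ≤ n ≤ N, 0 ≤ k ≤ p), and an integer k with 1 ≤ k ≤ p. Let μ = min_{1 ≤ n ≤ N} a_n, let α ∈ Θ_{2p} with |α|_∞ < μ^{2k}, let ℓ_α be a 2p-times continuously differentiable function on [x_0,x_N] satisfying ℓ_α(L_n(x)) = α_n ℓ_α(x) + q_n(α_n, x) for all x ∈ [x_0,x_N] and 1 ≤ n ≤ N, and let φ be the classical Lidstone interpolation function for the data. Then max_{1 ≤ n ≤ N} sup_{x ∈ (x_{n−1},x_n)}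 |ℓ_α^{(2k)}(x) − φ^{(2k)}(x)| ≤ (|α|_∞ / (μ^{2k} − |α|_∞)) · ( max_{1 ≤ n ≤ N} sup_{x ∈ (x_{n−1},x_n)} |φ^{(2k)}(x)| + M_{2k,2p} ), where |α|_∞ = max_n |α_n| and M_{2k,2p} = (2ρπ/3) Σ_{l=0}^{p−k} ((x_N − x_0)/π)^{2l}. -/
/-- The defining property of the sequence of Lidstone polynomial functions. -/
def LidstoneProp (Λ : ℕ → ℝ → ℝ) : Prop :=
  (∀ l : ℕ, ∃ P : Polynomial ℝ, ∀ x : ℝ, Λ l x = P.eval x) ∧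
  (∀ x : ℝ, Λ 0 x = x) ∧
  (∀ l : ℕ, (∀ x : ℝ, iteratedDeriv 2 (Λ (l + 1)) x = Λ l x) ∧
    Λ (l + 1) 0 = 0 ∧ Λ (l + 1) 1 = 0)

namespace LidAux
open Polynomial Set Real



lemma poly_iteratedDeriv (P : ℝ[X]) (n : ℕ) :
    iteratedDeriv n (fun t => P.eval t) = fun t => (derivative^[n] P).eval t := by
  induction n with
  | zero => simp
  | succ n ih =>
    rw [iteratedDeriv_succ, ih, Function.iterate_succ_apply']
    funext t
    exact Polynomial.deriv _

lemma poly_iteratedDerivWithin (P : ℝ[X]) (n : ℕ) {s : Set ℝ} (hs : UniqueDiffOn ℝ s) :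
    ∀ t ∈ s, iteratedDerivWithin n (fun u => P.eval u) s t = (derivative^[n] P).eval t := by
  induction n with
  | zero => intro t ht; simp
  | succ n ih =>
    intro t ht
    rw [iteratedDerivWithin_succ]
    have h1 : derivWithin (iteratedDerivWithin n (fun u => P.eval u) s) s t
        = derivWithin (fun u => (derivative^[n] P).eval u) s t :=
      derivWithin_congr (fun u hu => ih u hu) (ih t ht)
    rw [h1, DifferentiableAt.derivWithin (Polynomial.differentiable _ t) (hs t ht),
      Polynomial.deriv, Function.iterate_succ_apply']

lemma lin_eq_zero {P : ℝ[X]} (h1 : P.natDegree ≤ 1) {a b : ℝ} (hab : a ≠ b)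
    (ha : P.eval a = 0) (hb : P.eval b = 0) : P = 0 := by
  have hP := Polynomial.eq_X_add_C_of_natDegree_le_one h1
  rw [hP] at ha hb
  simp only [eval_add, eval_mul, eval_C, eval_X] at ha hb
  have h2 : P.coeff 1 = 0 := by
    have h3 : P.coeff 1 * (a - b) = 0 := by linarith
    rcases mul_eq_zero.mp h3 with h | h
    · exact h
    · exact absurd (sub_eq_zero.mp h) hab
  have h4 : P.coeff 0 = 0 := by rw [h2] at ha; linarith
  rw [hP, h2, h4]; simp

lemma even_derivs_zero {a b : ℝ} (hab : a ≠ b) :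
    ∀ p : ℕ, ∀ P : ℝ[X], P.natDegree ≤ 2*p+1 →
      (∀ l ≤ p, (derivative^[2*l] P).eval a = 0 ∧ (derivative^[2*l] P).eval b = 0) →
      P = 0 := by
  intro p
  induction p with
  | zero =>
    intro P hd hc
    exact lin_eq_zero (by simpa using hd) hab
      (by simpa using (hc 0 le_rfl).1) (by simpa using (hc 0 le_rfl).2)
  | succ p ih =>
    intro P hd hc
    have hQ : derivative^[2] P = 0 := by
      apply ih
      · have e1 : (derivative P).natDegree ≤ 2*p+2 := by
          have := Polynomial.natDegree_derivative_le P
          omega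
        have e2 : (derivative^[2] P).natDegree ≤ 2*p+1 := by
          have h := Polynomial.natDegree_derivative_le (derivative P)
          rw [show derivative^[2] P = derivative (derivative P) by
            rw [Function.iterate_succ_apply', Function.iterate_one]]
          omega
        exact e2
      · intro l hl
        have h := hc (l+1) (by omega)
        rw [show 2*(l+1) = 2*l + 2 by ring, Function.iterate_add_apply] at h
        exact h
    have h1 : derivative (derivative P) = 0 := by
      rw [← Function.iterate_one derivative, ← Function.iterate_add_apply]
      exact hQ
    have h2 : (derivative P).natDegree = 0 :=
      Polynomial.natDegree_eq_zero_of_derivative_eq_zero h1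
    have h3 : P.natDegree ≤ 1 := by
      by_contra h
      push_neg at h
      have hne : P.coeff P.natDegree ≠ 0 := by
        apply Polynomial.coeff_ne_zero_of_eq_degree
        exact Polynomial.degree_eq_natDegree (fun h0 => by simp [h0] at h)
      have hco : (derivative P).coeff (P.natDegree - 1) ≠ 0 := by
        rw [Polynomial.coeff_derivative]
        rw [show P.natDegree - 1 + 1 = P.natDegree by omega]
        push_cast
        refine mul_ne_zero hne ?_
        have : (0:ℝ) < (P.natDegree - 1 : ℕ) + 1 := by positivity
        exact ne_of_gt this
      have := Polynomial.le_natDegree_of_ne_zero hco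
      omega
    exact lin_eq_zero h3 hab (by simpa using (hc 0 (by omega)).1)
      (by simpa using (hc 0 (by omega)).2)

lemma iterate_derivative_comp_affine (a b : ℝ) (n : ℕ) : ∀ P : ℝ[X],
    derivative^[n] (P.comp (C a * X + C b))
      = a^n • ((derivative^[n] P).comp (C a * X + C b)) := by
  induction n with
  | zero => intro P; simp
  | succ n ih =>
    intro P
    rw [Function.iterate_succ_apply, Polynomial.derivative_comp]
    have hA : derivative (C a * X + C b) = C a := by simp
    rw [hA, ← Polynomial.smul_eq_C_mul, Function.iterate_succ_apply]
    rw [show derivative^[n] (a • (derivative P).comp (C a * X + C b))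
        = a • derivative^[n] ((derivative P).comp (C a * X + C b)) from
      Polynomial.iterate_derivative_smul a _ n]
    rw [ih (derivative P), smul_smul, pow_succ, mul_comm]




lemma cos_quad : ∀ t : ℝ, 0 ≤ t → 1 - t^2/2 ≤ Real.cos t := by
  have hmono : MonotoneOn (fun t : ℝ => Real.cos t - 1 + t^2/2) (Ici 0) := by
    apply monotoneOn_of_deriv_nonneg (convex_Ici 0)
    · fun_prop
    · apply Differentiable.differentiableOn
      fun_prop
    · intro t ht
      rw [interior_Ici] at ht
      have hd : HasDerivAt (fun t : ℝ => Real.cos t - 1 + t^2/2) (-Real.sin t + 2*t^(2-1)/2) t :=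
        ((Real.hasDerivAt_cos t).sub_const 1).add ((hasDerivAt_pow 2 t).div_const 2)
      rw [hd.deriv]
      have := Real.sin_le (le_of_lt ht)
      norm_num
      linarith
  intro t ht
  have := hmono (self_mem_Ici) (mem_Ici.mpr ht) ht
  simp only [Real.cos_zero] at this
  norm_num at this ⊢
  linarith

lemma sin_cubic : ∀ t : ℝ, 0 ≤ t → t - t^3/6 ≤ Real.sin t := by
  have hmono : MonotoneOn (fun t : ℝ => Real.sin t - t + t^3/6) (Ici 0) := by
    apply monotoneOn_of_deriv_nonneg (convex_Ici 0)
    · fun_prop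
    · apply Differentiable.differentiableOn
      fun_prop
    · intro t ht
      rw [interior_Ici] at ht
      have hd : HasDerivAt (fun t : ℝ => Real.sin t - t + t^3/6)
          (Real.cos t - 1 + 3*t^(3-1)/6) t :=
        ((Real.hasDerivAt_sin t).sub (hasDerivAt_id t)).add ((hasDerivAt_pow 3 t).div_const 6)
      rw [hd.deriv]
      have := cos_quad t (le_of_lt ht)
      norm_num
      nlinarith
  intro t ht
  have := hmono (self_mem_Ici) (mem_Ici.mpr ht) ht
  simp only [Real.sin_zero] at this
  linarith

lemma sin_lower_half {u : ℝ} (h0 : 0 ≤ u) (h1 : u ≤ 1/2) :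
    Real.pi * (u * (1-u)) ≤ Real.sin (Real.pi * u) := by
  have hpi3 := Real.pi_gt_three
  have hpi315 := Real.pi_lt_d2
  have hc := sin_cubic (Real.pi * u) (by positivity)
  have hu2 : u^3 ≤ u^2/2 := by nlinarith [sq_nonneg u]
  have hp2 : Real.pi^2 ≤ 9.9225 := by nlinarith
  have hkey : Real.pi^2 * u^3 ≤ 9.9225 * (u^2/2) := by
    calc Real.pi^2 * u^3 ≤ 9.9225 * u^3 :=
          mul_le_mul_of_nonneg_right hp2 (by positivity)
    _ ≤ 9.9225 * (u^2/2) := by nlinarith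
  have : Real.pi * (u * (1-u)) ≤ Real.pi * u - (Real.pi * u)^3/6 := by
    have h6 : Real.pi^2 * u^3 ≤ 6 * u^2 := by nlinarith [sq_nonneg u]
    have hpp := Real.pi_pos
    nlinarith [mul_le_mul_of_nonneg_left h6 (le_of_lt hpp)]
  linarith

lemma sin_lower {u : ℝ} (h0 : 0 ≤ u) (h1 : u ≤ 1) :
    Real.pi * (u * (1-u)) ≤ Real.sin (Real.pi * u) := by
  rcases le_or_gt u (1/2) with h | h
  · exact sin_lower_half h0 h
  · have h2 : Real.sin (Real.pi * u) = Real.sin (Real.pi * (1-u)) := by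
      rw [← Real.sin_pi_sub]
      ring_nf
    rw [h2]
    have := sin_lower_half (u := 1-u) (by linarith) (by linarith)
    calc Real.pi * (u * (1-u)) = Real.pi * ((1-u) * (1-(1-u))) := by ring
    _ ≤ _ := this

lemma nonneg_of_concave {h : ℝ → ℝ} (hd : Differentiable ℝ h)
    (hd' : Differentiable ℝ (deriv h))
    (hd2 : ∀ u ∈ Ioo (0:ℝ) 1, deriv (deriv h) u ≤ 0)
    (h0 : h 0 = 0) (h1 : h 1 = 0) : ∀ u ∈ Icc (0:ℝ) 1, 0 ≤ h u := by
  have hc : ConcaveOn ℝ (Icc 0 1) h := by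
    apply concaveOn_of_deriv2_nonpos (convex_Icc 0 1) hd.continuous.continuousOn
      hd.differentiableOn hd'.differentiableOn
    intro x hx
    rw [interior_Icc] at hx
    have he : deriv^[2] h = deriv (deriv h) := by
      rw [Function.iterate_succ_apply', Function.iterate_one]
    rw [he]
    exact hd2 x hx
  intro u hu
  have key := hc.2 (left_mem_Icc.mpr zero_le_one) (right_mem_Icc.mpr zero_le_one)
    (by linarith [hu.2] : (0:ℝ) ≤ 1-u) hu.1 (by ring)
  simp only [smul_eq_mul, h0, h1, mul_zero, add_zero, smul_zero] at key
  convert key using 2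
  · rfl
  · ring


lemma poly_contDiff (P : ℝ[X]) {n : WithTop ℕ∞} : ContDiff ℝ n fun x : ℝ => P.eval x := by
  induction P using Polynomial.induction_on' with
  | add p q hp hq => simpa [Polynomial.eval_add] using hp.add hq
  | monomial i a =>
    simpa [Polynomial.eval_monomial] using (contDiff_const (c := a)).mul (contDiff_id.pow i)




lemma natDegree_le_one_of_dd_zero {P : ℝ[X]} (h1 : derivative (derivative P) = 0) :
    P.natDegree ≤ 1 := by
  have h2 : (derivative P).natDegree = 0 :=
    Polynomial.natDegree_eq_zero_of_derivative_eq_zero h1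
  by_contra h
  push_neg at h
  have hne : P.coeff P.natDegree ≠ 0 := by
    apply Polynomial.coeff_ne_zero_of_eq_degree
    exact Polynomial.degree_eq_natDegree (fun h0 => by simp [h0] at h)
  have hco : (derivative P).coeff (P.natDegree - 1) ≠ 0 := by
    rw [Polynomial.coeff_derivative,
      show P.natDegree - 1 + 1 = P.natDegree by omega]
    refine mul_ne_zero hne ?_
    have : (0:ℝ) < (P.natDegree - 1 : ℕ) + 1 := by positivity
    exact ne_of_gt this
  have := Polynomial.le_natDegree_of_ne_zero hco
  omega

variable {Λ : ℕ → ℝ → ℝ}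

lemma lidstone_poly (hΛ : LidstoneProp Λ) :
    ∃ P : ℕ → ℝ[X], (∀ l x, Λ l x = (P l).eval x) ∧ P 0 = X ∧
      (∀ l, derivative (derivative (P (l+1))) = P l) ∧
      (∀ l, (P l).natDegree ≤ 2*l+1) := by
  choose P hP using hΛ.1
  have h0 : P 0 = X := by
    apply Polynomial.funext
    intro r
    rw [← hP 0 r, hΛ.2.1, eval_X]
  have hstep : ∀ l, derivative (derivative (P (l+1))) = P l := by
    intro l
    apply Polynomial.funext
    intro r
    have hfun : Λ (l+1) = fun t => (P (l+1)).eval t := funext (hP (l+1))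
    have := (hΛ.2.2 l).1 r
    rw [hfun, poly_iteratedDeriv] at this
    rw [show derivative (derivative (P (l+1))) = derivative^[2] (P (l+1)) by
      rw [Function.iterate_succ_apply', Function.iterate_one]]
    rw [← hP l r]
    simpa using this
  refine ⟨P, hP, h0, hstep, ?_⟩
  intro l
  induction l with
  | zero => rw [h0]; simp
  | succ l ih =>
    by_contra h
    push_neg at h
    set D := (P (l+1)).natDegree with hD
    have hD4 : 2*l+4 ≤ D := by omega
    have hne : (P (l+1)).coeff D ≠ 0 := by
      apply Polynomial.coeff_ne_zero_of_eq_degree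
      exact Polynomial.degree_eq_natDegree (fun h0 => by simp [h0, hD] at h)
    have hco1 : (derivative (P (l+1))).coeff (D - 1) ≠ 0 := by
      rw [Polynomial.coeff_derivative, show D - 1 + 1 = D by omega]
      refine mul_ne_zero hne (by positivity)
    have hco2 : (derivative (derivative (P (l+1)))).coeff (D - 2) ≠ 0 := by
      rw [Polynomial.coeff_derivative, show D - 2 + 1 = D - 1 by omega]
      refine mul_ne_zero hco1 (by positivity)
    rw [hstep l] at hco2
    have := Polynomial.le_natDegree_of_ne_zero hco2
    omega

lemma lidstone_zero (hΛ : LidstoneProp Λ) : ∀ l, Λ l 0 = 0 := by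
  intro l
  cases l with
  | zero => exact hΛ.2.1 0
  | succ l => exact (hΛ.2.2 l).2.1

lemma lidstone_at_one (hΛ : LidstoneProp Λ) : ∀ l, 1 ≤ l → Λ l 1 = 0 := by
  intro l hl
  cases l with
  | zero => omega
  | succ l => exact (hΛ.2.2 l).2.2

lemma lidstone_one_explicit (hΛ : LidstoneProp Λ) : ∀ u : ℝ, Λ 1 u = (u^3 - u)/6 := by
  obtain ⟨P, hP, h0, hstep, _⟩ := lidstone_poly hΛ
  set R : ℝ[X] := P 1 - C (6⁻¹ : ℝ) * (X^3 - X) with hR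
  have hdd : derivative (derivative R) = 0 := by
    rw [hR]
    simp only [derivative_sub, derivative_C_mul, derivative_sub, derivative_X_pow,
      derivative_X]
    rw [hstep 0, h0]
    apply Polynomial.funext
    intro r
    simp
    ring
  have hdeg := natDegree_le_one_of_dd_zero hdd
  have he0 : R.eval 0 = 0 := by
    rw [hR]; simp [← hP 1 0, lidstone_zero hΛ 1]
  have he1 : R.eval 1 = 0 := by
    rw [hR]; simp [← hP 1 1, lidstone_at_one hΛ 1 le_rfl]
  have hzero := lin_eq_zero hdeg (by norm_num : (0:ℝ) ≠ 1) he0 he1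
  intro u
  have : R.eval u = 0 := by rw [hzero]; simp
  rw [hR] at this
  simp only [eval_sub, eval_mul, eval_C, eval_sub, eval_pow, eval_X] at this
  rw [hP 1 u]
  linarith

lemma lidstone_bound (hΛ : LidstoneProp Λ) :
    ∀ m : ℕ, ∀ u ∈ Icc (0:ℝ) 1,
      |Λ (m+1) u| ≤ Real.pi/3 * (1/Real.pi^2)^(m+1) * Real.sin (Real.pi * u) := by
  obtain ⟨P, hP, h0, hstep, _⟩ := lidstone_poly hΛ
  intro m
  induction m with
  | zero =>
    intro u hu
    obtain ⟨hu0, hu1⟩ := hu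
    rw [lidstone_one_explicit hΛ u]
    have hsin := sin_lower hu0 hu1
    have hpi := Real.pi_pos
    have hcube : 0 ≤ u * (1-u) * (1+u) := by
      apply mul_nonneg (mul_nonneg hu0 (by linarith)) (by linarith)
    have habs : |(u^3 - u)/6| = (u - u^3)/6 := by
      rw [abs_of_nonpos (by nlinarith)]
      ring
    rw [habs]
    have hrhs : Real.pi/3 * (1/Real.pi^2)^(0+1) * Real.sin (Real.pi * u)
        = Real.sin (Real.pi * u) / (3 * Real.pi) := by
      field_simp
      rw [zero_add, pow_one, one_div, mul_inv_cancel₀ (pow_ne_zero 2 hpi.ne'), one_mul]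
    rw [hrhs]
    have hsq : 0 ≤ u * (1-u) * (1-u) := by
      apply mul_nonneg (mul_nonneg hu0 (by linarith)) (by linarith)
    have h1 : (u - u^3)/6 ≤ u*(1-u)/3 := by nlinarith
    have h2 : u*(1-u)/3 ≤ Real.sin (Real.pi * u) / (3 * Real.pi) := by
      rw [div_le_div_iff₀ (by norm_num) (by positivity)]
      nlinarith
    linarith
  | succ m ih =>
    have hpi := Real.pi_pos
    set B : ℝ := Real.pi/3 * (1/Real.pi^2)^(m+1) with hB
    set c : ℝ := Real.pi/3 * (1/Real.pi^2)^(m+1+1) with hc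
    have hcB : c * Real.pi^2 = B := by
      rw [hc, hB, pow_succ]
      field_simp
    have hBpos : 0 ≤ B := by rw [hB]; positivity
    have key : ∀ ε : ℝ, ε = 1 ∨ ε = -1 → ∀ u ∈ Icc (0:ℝ) 1,
        0 ≤ c * Real.sin (Real.pi * u) - ε * (P (m+2)).eval u := by
      intro ε hε
      have hD1 : ∀ u : ℝ, HasDerivAt (fun v => c * Real.sin (Real.pi*v) - ε * (P (m+2)).eval v)
          (c * (Real.cos (Real.pi*u) * Real.pi) - ε * ((derivative (P (m+2))).eval u)) u := by
        intro u
        have hs : HasDerivAt (fun v : ℝ => Real.sin (Real.pi*v))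
            (Real.cos (Real.pi*u) * Real.pi) u := by
          have := (Real.hasDerivAt_sin (Real.pi*u)).comp u ((hasDerivAt_id u).const_mul Real.pi)
          simpa [Function.comp_def] using this
        exact (hs.const_mul c).sub ((Polynomial.hasDerivAt (P (m+2)) u).const_mul ε)
      have hD2 : ∀ u : ℝ, HasDerivAt
          (fun v => c * (Real.cos (Real.pi*v) * Real.pi) - ε * ((derivative (P (m+2))).eval v))
          (c * (-Real.sin (Real.pi*u) * Real.pi * Real.pi)
            - ε * ((derivative (derivative (P (m+2)))).eval u)) u := by
        intro u
        have hs : HasDerivAt (fun v : ℝ => Real.cos (Real.pi*v))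
            (-Real.sin (Real.pi*u) * Real.pi) u := by
          have := (Real.hasDerivAt_cos (Real.pi*u)).comp u ((hasDerivAt_id u).const_mul Real.pi)
          simpa [Function.comp_def] using this
        exact ((hs.mul_const Real.pi).const_mul c).sub
          ((Polynomial.hasDerivAt (derivative (P (m+2))) u).const_mul ε)
      have hderiv : deriv (fun v => c * Real.sin (Real.pi*v) - ε * (P (m+2)).eval v)
          = fun u => c * (Real.cos (Real.pi*u) * Real.pi)
              - ε * ((derivative (P (m+2))).eval u) :=
        funext fun u => (hD1 u).deriv
      apply nonneg_of_concave
      · exact fun u => (hD1 u).differentiableAt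
      · rw [hderiv]; exact fun u => (hD2 u).differentiableAt
      · intro u hu
        rw [hderiv, (hD2 u).deriv, hstep (m+1)]
        have habs := ih u ⟨le_of_lt hu.1, le_of_lt hu.2⟩
        rw [hP (m+1) u] at habs
        have h1 := (abs_le.mp habs).1
        have h2 := (abs_le.mp habs).2
        have hrw : c * (-Real.sin (Real.pi*u) * Real.pi * Real.pi)
            = -(B * Real.sin (Real.pi*u)) := by
          rw [← hcB]; ring
        rw [hrw]
        rcases hε with h | h <;> rw [h] <;> nlinarith
      · have h0 : (P (m+2)).eval 0 = 0 := by rw [← hP (m+2) 0]; exact lidstone_zero hΛ (m+2)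
        simp [h0]
      · have h1 : (P (m+2)).eval 1 = 0 := by
          rw [← hP (m+2) 1]; exact lidstone_at_one hΛ (m+2) (by omega)
        simp [h1, Real.sin_pi]
    intro u hu
    have k1 := key 1 (Or.inl rfl) u hu
    have k2 := key (-1) (Or.inr rfl) u hu
    rw [hP (m+1+1) u]
    have : |(P (m+2)).eval u| ≤ c * Real.sin (Real.pi * u) :=
      abs_le.mpr ⟨by linarith, by linarith⟩
    simpa [hc] using this




lemma iterD_sum {ι : Type*} (n : ℕ) (s : Finset ι) (f : ι → ℝ[X]) :
    derivative^[n] (∑ i ∈ s, f i) = ∑ i ∈ s, derivative^[n] (f i) := by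
  induction n with
  | zero => simp
  | succ n ih =>
    rw [Function.iterate_succ_apply', ih, Polynomial.derivative_sum]
    exact Finset.sum_congr rfl fun i _ => (Function.iterate_succ_apply' _ _ _).symm

lemma iterD_add (n : ℕ) (A B : ℝ[X]) :
    derivative^[n] (A + B) = derivative^[n] A + derivative^[n] B := by
  induction n generalizing A B with
  | zero => simp
  | succ n ih => rw [Function.iterate_succ_apply, Polynomial.derivative_add,
      Function.iterate_succ_apply, Function.iterate_succ_apply, ih]

lemma iterD_mul_C (n : ℕ) (Q : ℝ[X]) (e : ℝ) :
    derivative^[n] (Q * C e) = derivative^[n] Q * C e := by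
  rw [mul_comm, Polynomial.iterate_derivative_C_mul, mul_comm]

section Gfam

variable {P : ℕ → ℝ[X]}

lemma Pderiv_le (hstep : ∀ l, derivative (derivative (P (l+1))) = P l) :
    ∀ (j l : ℕ), j ≤ l → derivative^[2*j] (P l) = P (l - j) := by
  intro j
  induction j with
  | zero => intro l _; simp
  | succ j ih =>
    intro l hjl
    obtain ⟨l', rfl⟩ : ∃ l', l = l' + 1 := ⟨l - 1, by omega⟩
    have h2 : derivative^[2] (P (l'+1)) = P l' := by
      have h3 := hstep l'
      rwa [show derivative (derivative (P (l'+1))) = derivative^[2] (P (l'+1)) by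
        rw [Function.iterate_succ_apply', Function.iterate_one]] at h3
    rw [show 2*(j+1) = 2*j + 2 by ring, Function.iterate_add_apply, h2,
      ih l' (by omega)]
    congr 1
    omega

lemma Pderiv_gt (h0 : P 0 = X) (hstep : ∀ l, derivative (derivative (P (l+1))) = P l) :
    ∀ (j l : ℕ), l < j → derivative^[2*j] (P l) = 0 := by
  intro j l hlj
  have h1 : derivative^[2*l] (P l) = X := by rw [Pderiv_le hstep l l le_rfl]; simpa using h0
  have h2 : 2*j = 2*(j-l) + 2*l := by omega
  rw [h2, Function.iterate_add_apply, h1]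
  obtain ⟨m, hm⟩ : ∃ m, 2*(j-l) = m + 2 := ⟨2*(j-l) - 2, by omega⟩
  rw [hm, Function.iterate_add_apply]
  have hX : derivative^[2] (X : ℝ[X]) = 0 := by
    rw [show (2:ℕ) = 1+1 by rfl, Function.iterate_add_apply]
    simp
  rw [hX, Function.iterate_fixed Polynomial.derivative_zero]

/-- The generalized Lidstone interpolation polynomial for endpoints `u < v`. -/
noncomputable def Gpoly (P : ℕ → ℝ[X]) (p : ℕ) (u v : ℝ) (c d : ℕ → ℝ) : ℝ[X] :=
  ∑ l ∈ Finset.range (p+1),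
    (C (c l) * (P l).comp (C (-(v-u)⁻¹) * X + C (v/(v-u)))
      + C (d l) * (P l).comp (C (v-u)⁻¹ * X + C (-(u/(v-u))))) * C ((v-u)^(2*l))

lemma Gpoly_eval (p : ℕ) (u v : ℝ) (c d : ℕ → ℝ) (t : ℝ) :
    eval t (Gpoly P p u v c d) = ∑ l ∈ Finset.range (p+1),
      (c l * (P l).eval ((v-t)/(v-u)) + d l * (P l).eval ((t-u)/(v-u))) * (v-u)^(2*l) := by
  unfold Gpoly
  rw [Polynomial.eval_finset_sum]
  apply Finset.sum_congr rfl
  intro l _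
  have e1 : (v-t)/(v-u) = -(v-u)⁻¹ * t + v/(v-u) := by
    rw [div_eq_mul_inv, div_eq_mul_inv]
    ring
  have e2 : (t-u)/(v-u) = (v-u)⁻¹ * t + -(u/(v-u)) := by
    rw [div_eq_mul_inv, div_eq_mul_inv]
    ring
  simp [eval_comp, e1, e2]

lemma Gpoly_natDegree_le (p : ℕ) (u v : ℝ) (c d : ℕ → ℝ)
    (hdeg : ∀ l, (P l).natDegree ≤ 2*l+1) :
    (Gpoly P p u v c d).natDegree ≤ 2*p+1 := by
  unfold Gpoly
  apply Polynomial.natDegree_sum_le_of_forall_le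
  intro l hl
  have hl' : l ≤ p := by simpa [Nat.lt_succ_iff] using hl
  have hA : ∀ a b : ℝ, (C a * X + C b : ℝ[X]).natDegree ≤ 1 := by
    intro a b
    refine (Polynomial.natDegree_add_le _ _).trans ?_
    simp only [Polynomial.natDegree_C, max_le_iff]
    constructor
    · refine (Polynomial.natDegree_mul_le).trans ?_
      simp [Polynomial.natDegree_X]
    · omega
  have hcomp : ∀ (a b : ℝ) (e : ℝ), (C e * (P l).comp (C a * X + C b)).natDegree ≤ 2*p+1 := by
    intro a b e
    refine (Polynomial.natDegree_mul_le).trans ?_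
    have := (Polynomial.natDegree_comp_le (p := P l) (q := C a * X + C b)).trans
      (Nat.mul_le_mul (hdeg l) (hA a b))
    simp only [Polynomial.natDegree_C, zero_add]
    omega
  refine (Polynomial.natDegree_mul_le).trans ?_
  simp only [Polynomial.natDegree_C, add_zero]
  refine (Polynomial.natDegree_add_le _ _).trans ?_
  exact max_le (hcomp _ _ _) (hcomp _ _ _)

lemma Gpoly_deriv_eval (h0 : P 0 = X) (hstep : ∀ l, derivative (derivative (P (l+1))) = P l)
    (p : ℕ) {u v : ℝ} (huv : u < v) (c d : ℕ → ℝ) (j : ℕ) (t : ℝ) :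
    eval t (derivative^[2*j] (Gpoly P p u v c d)) =
      ∑ l ∈ Finset.range (p+1), (if j ≤ l then
        (c l * (P (l-j)).eval ((v-t)/(v-u)) + d l * (P (l-j)).eval ((t-u)/(v-u)))
          * (v-u)^(2*(l-j)) else 0) := by
  have hvu : v - u ≠ 0 := by linarith [huv]
  unfold Gpoly
  rw [iterD_sum, Polynomial.eval_finset_sum]
  apply Finset.sum_congr rfl
  intro l _
  rw [iterD_mul_C, iterD_add, Polynomial.iterate_derivative_C_mul,
    Polynomial.iterate_derivative_C_mul,
    iterate_derivative_comp_affine, iterate_derivative_comp_affine]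
  by_cases hjl : j ≤ l
  · rw [if_pos hjl, Pderiv_le hstep j l hjl]
    have e1 : (v-t)/(v-u) = -(v-u)⁻¹ * t + v/(v-u) := by
      rw [div_eq_mul_inv, div_eq_mul_inv]; ring
    have e2 : (t-u)/(v-u) = (v-u)⁻¹ * t + -(u/(v-u)) := by
      rw [div_eq_mul_inv, div_eq_mul_inv]; ring
    have hneg : (-(v-u)⁻¹)^(2*j) = ((v-u)⁻¹)^(2*j) :=
      Even.neg_pow (by exact ⟨j, by ring⟩) _
    have hpow : ((v-u)⁻¹)^(2*j) * (v-u)^(2*l) = (v-u)^(2*(l-j)) := by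
      calc ((v-u)⁻¹)^(2*j) * (v-u)^(2*l)
          = (((v-u)⁻¹) * (v-u))^(2*j) * (v-u)^(2*(l-j)) := by
            rw [mul_pow, mul_assoc, ← pow_add]
            congr 2
            omega
        _ = (v-u)^(2*(l-j)) := by rw [inv_mul_cancel₀ hvu, one_pow, one_mul]
    simp only [eval_mul, eval_add, eval_smul, eval_C, eval_comp, eval_mul, eval_add, eval_X,
      smul_eq_mul]
    rw [← e1, ← e2, hneg]
    linear_combination (c l * eval ((v - t) / (v - u)) (P (l - j))
      + d l * eval ((t - u) / (v - u)) (P (l - j))) * hpow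
  · rw [if_neg hjl, Pderiv_gt h0 hstep j l (by omega)]
    simp

lemma Gpoly_eval_left (h0 : P 0 = X) (hstep : ∀ l, derivative (derivative (P (l+1))) = P l)
    (hz : ∀ l, (P l).eval 0 = 0) (h1e : ∀ l, 1 ≤ l → (P l).eval 1 = 0)
    (p : ℕ) {u v : ℝ} (huv : u < v) (c d : ℕ → ℝ) {j : ℕ} (hj : j ≤ p) :
    eval u (derivative^[2*j] (Gpoly P p u v c d)) = c j := by
  have hvu : v - u ≠ 0 := by linarith
  rw [Gpoly_deriv_eval h0 hstep p huv c d j u]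
  rw [Finset.sum_eq_single_of_mem j (Finset.mem_range.mpr (by omega))]
  · rw [if_pos le_rfl]
    simp only [Nat.sub_self, sub_self, zero_div, div_self hvu, hz 0]
    rw [show (P 0).eval 1 = 1 by rw [h0]; simp]
    simp
  · intro l _ hlj
    by_cases hjl : j ≤ l
    · rw [if_pos hjl]
      have hlj1 : 1 ≤ l - j := by omega
      rw [div_self hvu, sub_self, zero_div, h1e (l-j) hlj1, hz (l-j)]
      ring
    · rw [if_neg hjl]

lemma Gpoly_eval_right (h0 : P 0 = X) (hstep : ∀ l, derivative (derivative (P (l+1))) = P l)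
    (hz : ∀ l, (P l).eval 0 = 0) (h1e : ∀ l, 1 ≤ l → (P l).eval 1 = 0)
    (p : ℕ) {u v : ℝ} (huv : u < v) (c d : ℕ → ℝ) {j : ℕ} (hj : j ≤ p) :
    eval v (derivative^[2*j] (Gpoly P p u v c d)) = d j := by
  have hvu : v - u ≠ 0 := by linarith
  rw [Gpoly_deriv_eval h0 hstep p huv c d j v]
  rw [Finset.sum_eq_single_of_mem j (Finset.mem_range.mpr (by omega))]
  · rw [if_pos le_rfl]
    simp only [Nat.sub_self, sub_self, zero_div, div_self hvu, hz 0]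
    rw [show (P 0).eval 1 = 1 by rw [h0]; simp]
    simp
  · intro l _ hlj
    by_cases hjl : j ≤ l
    · rw [if_pos hjl]
      have hlj1 : 1 ≤ l - j := by omega
      rw [div_self hvu, sub_self, zero_div, h1e (l-j) hlj1, hz (l-j)]
      ring
    · rw [if_neg hjl]

lemma Gpoly_bound (h0 : P 0 = X) (hstep : ∀ l, derivative (derivative (P (l+1))) = P l)
    (hbd : ∀ m, 1 ≤ m → ∀ z ∈ Icc (0:ℝ) 1,
      |(P m).eval z| ≤ Real.pi/3 * (1/Real.pi^2)^m)
    (p k : ℕ) (hk1 : 1 ≤ k) (hkp : k ≤ p) {u v : ℝ} (huv : u < v) {c d : ℕ → ℝ} {ρ : ℝ}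
    (hc : ∀ l ≤ p, |c l| ≤ ρ) (hd : ∀ l ≤ p, |d l| ≤ ρ) :
    ∀ t ∈ Icc u v, |eval t (derivative^[2*k] (Gpoly P p u v c d))|
      ≤ 2*ρ*Real.pi/3 * ∑ m ∈ Finset.range (p-k+1), ((v-u)/Real.pi)^(2*m) := by
  intro t ht
  have hvu0 : (0:ℝ) < v - u := by linarith
  have hvu : v - u ≠ 0 := ne_of_gt hvu0
  have hpi := Real.pi_pos
  have hpi3 := Real.pi_gt_three
  have hρ : 0 ≤ ρ := le_trans (abs_nonneg _) (hc k hkp)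
  set w := (t-u)/(v-u) with hwdef
  have hw0 : 0 ≤ w := div_nonneg (by linarith [ht.1]) (le_of_lt hvu0)
  have hw1 : w ≤ 1 := by
    rw [hwdef, div_le_one hvu0]
    linarith [ht.2]
  have hvt : (v-t)/(v-u) = 1 - w := by
    rw [hwdef]
    field_simp
    ring
  rw [Gpoly_deriv_eval h0 hstep p huv c d k t]
  set F : ℕ → ℝ := fun l => (if k ≤ l then
    (c l * (P (l-k)).eval ((v-t)/(v-u)) + d l * (P (l-k)).eval ((t-u)/(v-u)))
      * (v-u)^(2*(l-k)) else 0) with hF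
  have step1 : |∑ l ∈ Finset.range (p+1), F l| ≤ ∑ l ∈ Finset.range (p+1), |F l| :=
    Finset.abs_sum_le_sum_abs _ _
  have step2 : ∑ l ∈ Finset.range (p+1), |F l| = ∑ l ∈ Finset.Ico k (p+1), |F l| := by
    rw [Finset.range_eq_Ico]
    symm
    apply Finset.sum_subset
    · exact Finset.Ico_subset_Ico (Nat.zero_le k) le_rfl
    · intro l hl1 hl2
      simp only [Finset.mem_Ico] at hl1 hl2
      have hnk : ¬ k ≤ l := by omega
      rw [hF]
      simp only [if_neg hnk, abs_zero]
  have step3 : ∑ l ∈ Finset.Ico k (p+1), |F l|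
      = ∑ m ∈ Finset.range (p-k+1), |F (k+m)| := by
    rw [Finset.sum_Ico_eq_sum_range, show p+1-k = p-k+1 by omega]
  have step4 : ∀ m ∈ Finset.range (p-k+1),
      |F (k+m)| ≤ 2*ρ*Real.pi/3 * ((v-u)/Real.pi)^(2*m) := by
    intro m hm
    have hmpk : k + m ≤ p := by
      simp only [Finset.mem_range] at hm
      omega
    rw [hF]
    simp only [if_pos (Nat.le_add_right k m), show k + m - k = m by omega]
    rw [hvt, hwdef]
    rcases Nat.eq_zero_or_pos m with hm0 | hm1
    · subst hm0
      rw [show (P 0).eval (1 - w) = 1 - w by rw [h0]; simp,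
        show (P 0).eval w = w by rw [h0]; simp]
      simp only [Nat.mul_zero, pow_zero, mul_one]
      have h1 : |c (k+0) * (1-w) + d (k+0) * w| ≤ ρ := by
        calc |c (k+0) * (1-w) + d (k+0) * w|
            ≤ |c (k+0)| * |1-w| + |d (k+0)| * |w| := by
              refine (abs_add_le _ _).trans ?_
              rw [abs_mul, abs_mul]
          _ ≤ ρ * (1-w) + ρ * w := by
              rw [abs_of_nonneg (by linarith : (0:ℝ) ≤ 1-w), abs_of_nonneg hw0]
              have := hc (k+0) hmpk
              have := hd (k+0) hmpk
              nlinarith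
          _ = ρ := by ring
      calc |c (k+0) * (1-w) + d (k+0) * w| ≤ ρ := h1
        _ ≤ 2*ρ*Real.pi/3 := by nlinarith
    · have hBw : |(P m).eval (1-w)| ≤ Real.pi/3 * (1/Real.pi^2)^m :=
        hbd m hm1 (1-w) ⟨by linarith, by linarith⟩
      have hBw' : |(P m).eval w| ≤ Real.pi/3 * (1/Real.pi^2)^m :=
        hbd m hm1 w ⟨hw0, hw1⟩
      set B := Real.pi/3 * (1/Real.pi^2)^m with hBdef
      have hBpos : 0 ≤ B := by rw [hBdef]; positivity
      have h1 : |c (k+m) * (P m).eval (1-w) + d (k+m) * (P m).eval w| ≤ 2*ρ*B := by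
        calc |c (k+m) * (P m).eval (1-w) + d (k+m) * (P m).eval w|
            ≤ |c (k+m)| * |(P m).eval (1-w)| + |d (k+m)| * |(P m).eval w| := by
              refine (abs_add_le _ _).trans ?_
              rw [abs_mul, abs_mul]
          _ ≤ ρ * B + ρ * B := by
              have hc1 := hc (k+m) hmpk
              have hd1 := hd (k+m) hmpk
              have := abs_nonneg (c (k+m))
              have := abs_nonneg (d (k+m))
              have := abs_nonneg ((P m).eval (1-w))
              have := abs_nonneg ((P m).eval w)
              nlinarith
          _ = 2*ρ*B := by ring
      rw [abs_mul, abs_pow, abs_of_pos hvu0]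
      have hrw : 2*ρ*Real.pi/3 * ((v-u)/Real.pi)^(2*m)
          = (2*ρ*B) * (v-u)^(2*m) := by
        rw [hBdef, div_pow, div_pow, one_pow, pow_mul Real.pi]
        ring
      rw [hrw]
      apply mul_le_mul_of_nonneg_right h1 (by positivity)
  calc |∑ l ∈ Finset.range (p+1), F l|
      ≤ ∑ l ∈ Finset.range (p+1), |F l| := step1
    _ = ∑ m ∈ Finset.range (p-k+1), |F (k+m)| := by rw [step2, step3]
    _ ≤ ∑ m ∈ Finset.range (p-k+1), 2*ρ*Real.pi/3 * ((v-u)/Real.pi)^(2*m) :=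
        Finset.sum_le_sum step4
    _ = 2*ρ*Real.pi/3 * ∑ m ∈ Finset.range (p-k+1), ((v-u)/Real.pi)^(2*m) := by
        rw [Finset.mul_sum]

end Gfam




lemma xmono {x : ℕ → ℝ} {N : ℕ} (hx : ∀ n < N, x n < x (n+1)) :
    ∀ i j, i ≤ j → j ≤ N → x i ≤ x j := by
  intro i j hij hjN
  obtain ⟨d, rfl⟩ := Nat.exists_eq_add_of_le hij
  clear hij
  induction d with
  | zero => simp
  | succ d ih =>
    have h1 : x i ≤ x (i + d) := ih (by omega)
    have h2 : x (i + d) < x (i + d + 1) := hx (i + d) (by omega)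
    have : i + (d+1) = (i + d) + 1 := by omega
    rw [this]
    linarith

lemma xmono_strict {x : ℕ → ℝ} {N : ℕ} (hx : ∀ n < N, x n < x (n+1)) :
    ∀ i j, i < j → j ≤ N → x i < x j := by
  intro i j hij hjN
  have h1 : x i ≤ x (j-1) := xmono hx i (j-1) (by omega) (by omega)
  have h2 : x (j-1) < x j := by
    have := hx (j-1) (by omega)
    rwa [show j - 1 + 1 = j by omega] at this
  linarith

lemma locate {x : ℕ → ℝ} {N : ℕ} (hN : 1 ≤ N) {s : ℝ}
    (h1 : x 0 ≤ s) (h2 : s < x N) : ∃ m, 1 ≤ m ∧ m ≤ N ∧ x (m-1) ≤ s ∧ s < x m := by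
  classical
  have hTne : ((Finset.Icc 1 N).filter (fun m => s < x m)).Nonempty :=
    ⟨N, Finset.mem_filter.mpr ⟨Finset.mem_Icc.mpr ⟨hN, le_rfl⟩, h2⟩⟩
  obtain ⟨m, hmmem, hmmin⟩ : ∃ m ∈ (Finset.Icc 1 N).filter (fun m => s < x m),
      ∀ b ∈ (Finset.Icc 1 N).filter (fun m => s < x m), m ≤ b :=
    ⟨_, Finset.min'_mem _ hTne, fun b hb => Finset.min'_le _ b hb⟩
  rw [Finset.mem_filter, Finset.mem_Icc] at hmmem
  refine ⟨m, hmmem.1.1, hmmem.1.2, ?_, hmmem.2⟩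
  rcases Nat.eq_or_lt_of_le hmmem.1.1 with h | h
  · rw [show m - 1 = 0 by omega]
    exact h1
  · by_contra hc
    push_neg at hc
    have hmem : m - 1 ∈ (Finset.Icc 1 N).filter (fun m => s < x m) := by
      rw [Finset.mem_filter, Finset.mem_Icc]
      exact ⟨⟨by omega, by omega⟩, hc⟩
    have := hmmin (m-1) hmem
    omega

lemma le_on_boundary {F : ℝ → ℝ} {a b E : ℝ} (hab : a < b) {s : ℝ} (hs : s ∈ Ico a b)
    (hF : ContinuousWithinAt F (Ioo a b) s)
    (hbd : ∀ z ∈ Ioo a b, F z ≤ E) : F s ≤ E := by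
  have hcl : s ∈ closure (Ioo a b) := by
    rw [closure_Ioo (ne_of_lt hab)]
    exact ⟨hs.1, le_of_lt hs.2⟩
  have hne : (nhdsWithin s (Ioo a b)).NeBot := mem_closure_iff_nhdsWithin_neBot.mp hcl
  exact le_of_tendsto hF (eventually_nhdsWithin_of_forall hbd)

lemma iteratedDerivWithin_comp_affine {f : ℝ → ℝ} {u v : ℝ} (huv : u < v) {n : ℕ}
    (hf : ContDiffOn ℝ (n : ℕ) f (Icc u v)) {A B : ℝ}
    (hmaps : Set.MapsTo (fun z => A*z+B) (Icc u v) (Icc u v)) :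
    ∀ m, m ≤ n → ∀ t ∈ Icc u v,
      iteratedDerivWithin m (fun z => f (A*z+B)) (Icc u v) t
        = A^m * iteratedDerivWithin m f (Icc u v) (A*t+B) := by
  have hUD : UniqueDiffOn ℝ (Icc u v) := uniqueDiffOn_Icc huv
  intro m
  induction m with
  | zero => intro _ t ht; simp
  | succ m ih =>
    intro hmn t ht
    have hm : m ≤ n := by omega
    rw [iteratedDerivWithin_succ]
    have hcongr : derivWithin
          (iteratedDerivWithin m (fun z => f (A*z+B)) (Icc u v)) (Icc u v) t
        = derivWithin (fun z => A^m * iteratedDerivWithin m f (Icc u v) (A*z+B)) (Icc u v) t :=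
      derivWithin_congr (fun z hz => ih hm z hz) (ih hm t ht)
    rw [hcongr]
    have hd : HasDerivWithinAt (iteratedDerivWithin m f (Icc u v))
        (iteratedDerivWithin (m+1) f (Icc u v) (A*t+B)) (Icc u v) (A*t+B) := by
      have hdiff := hf.differentiableOn_iteratedDerivWithin
        (by exact_mod_cast Nat.lt_of_lt_of_le (Nat.lt_succ_self m) hmn) hUD
      have h1 := (hdiff (A*t+B) (hmaps ht)).hasDerivWithinAt
      rwa [← iteratedDerivWithin_succ] at h1
    have haff : HasDerivWithinAt (fun z => A*z+B) A (Icc u v) t := by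
      have := (((hasDerivAt_id t).const_mul A).add_const B).hasDerivWithinAt
        (s := Icc u v)
      simpa using this
    have hcomp := (hd.comp t haff hmaps).const_mul (A^m)
    have hcomp' : HasDerivWithinAt
        (fun z => A^m * iteratedDerivWithin m f (Icc u v) (A*z+B))
        (A^m * (iteratedDerivWithin (m+1) f (Icc u v) (A*t+B) * A)) (Icc u v) t := by
      simpa [Function.comp] using hcomp
    rw [hcomp'.derivWithin (hUD t ht)]
    ring


end LidAux

open Polynomial Set LidAux

/-- Error between the even-order derivatives of the Lidstone FIF `ℓ_α` and those
of the classical Lidstone interpolation function `φ` (given on each open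
subinterval by the derivatives of the polynomial piece `ψ n`): for `1 ≤ k ≤ p`,
`max_n sup_{(x (n-1), x n)} |ℓ_α^(2k) - φ^(2k)| ≤
 (|α|_∞ / (μ^(2k) - |α|_∞)) (max_n sup_{(x (n-1), x n)} |φ^(2k)| + M_{2k,2p})`. -/
theorem lidstone_FIF_derivative_vs_classical (Λ : ℕ → ℝ → ℝ) (hΛ : LidstoneProp Λ)
    (p N : ℕ) (hp : 1 ≤ p) (hN : 1 ≤ N)
    (x : ℕ → ℝ) (hx : ∀ n < N, x n < x (n + 1))
    (y : ℕ → ℕ → ℝ)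
    (k : ℕ) (hk1 : 1 ≤ k) (hk2 : k ≤ p)
    (L : ℕ → ℝ → ℝ)
    (hL : ∀ n t, L n t = ((x n - x (n - 1)) / (x N - x 0)) * t +
      (x N * x (n - 1) - x 0 * x n) / (x N - x 0))
    (α : ℕ → ℝ)
    (hα : ∀ n, 1 ≤ n → n ≤ N →
      |α n| < ((x n - x (n - 1)) / (x N - x 0)) ^ (2 * p))
    (q : ℕ → ℝ → ℝ)
    (hq : ∀ n, 1 ≤ n → n ≤ N →
      (∃ P : Polynomial ℝ, P.natDegree ≤ 2 * p + 1 ∧ ∀ t, q n t = P.eval t) ∧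
      ∀ l ≤ p,
        iteratedDeriv (2 * l) (q n) (x 0) =
          ((x n - x (n - 1)) / (x N - x 0)) ^ (2 * l) * y (n - 1) l - α n * y 0 l ∧
        iteratedDeriv (2 * l) (q n) (x N) =
          ((x n - x (n - 1)) / (x N - x 0)) ^ (2 * l) * y n l - α n * y N l)
    (μ ρ Aα : ℝ)
    (hμ : μ = (Finset.Icc 1 N).inf' (Finset.nonempty_Icc.mpr hN)
      (fun n => (x n - x (n - 1)) / (x N - x 0)))
    (hρ : ρ = (Finset.range (p + 1)).sup'
      (Finset.nonempty_range_iff.mpr p.succ_ne_zero)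
      (fun j => max |y 0 j| |y N j|))
    (hAα : Aα = (Finset.Icc 1 N).sup' (Finset.nonempty_Icc.mpr hN)
      (fun n => |α n|))
    (hAμ : Aα < μ ^ (2 * k))
    (ℓ : ℝ → ℝ)
    (hℓsmooth : ContDiffOn ℝ (2 * p) ℓ (Set.Icc (x 0) (x N)))
    (hℓ : ∀ n, 1 ≤ n → n ≤ N → ∀ t ∈ Set.Icc (x 0) (x N),
      ℓ (L n t) = α n * ℓ t + q n t)
    (φ : ℝ → ℝ) (ψ : ℕ → ℝ → ℝ)
    (hψ : ∀ n t, ψ n t = ∑ l ∈ Finset.range (p + 1),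
      (y (n - 1) l * Λ l ((x n - t) / (x n - x (n - 1))) +
        y n l * Λ l ((t - x (n - 1)) / (x n - x (n - 1)))) *
        (x n - x (n - 1)) ^ (2 * l))
    (hφcont : ContinuousOn φ (Set.Icc (x 0) (x N)))
    (hφ : ∀ n, 1 ≤ n → n ≤ N → ∀ t ∈ Set.Icc (x (n - 1)) (x n), φ t = ψ n t) :
    ∀ n, 1 ≤ n → n ≤ N → ∀ t ∈ Set.Ioo (x (n - 1)) (x n),
      |iteratedDerivWithin (2 * k) ℓ (Set.Icc (x 0) (x N)) t -
          iteratedDeriv (2 * k) (ψ n) t| ≤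
        (Aα / (μ ^ (2 * k) - Aα)) *
          (sSup {r : ℝ | ∃ m, 1 ≤ m ∧ m ≤ N ∧
              ∃ s ∈ Set.Ioo (x (m - 1)) (x m), r = |iteratedDeriv (2 * k) (ψ m) s|} +
            (2 * ρ * Real.pi / 3) *
              ∑ l ∈ Finset.range (p - k + 1), ((x N - x 0) / Real.pi) ^ (2 * l)) := by
  intro n hn1 hn2 t ht
  -- ## basic positivity and partition facts
  have hH : (0:ℝ) < x N - x 0 := by
    have := xmono_strict hx 0 N (by omega) le_rfl
    linarith
  have hxx : x 0 < x N := by linarith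
  have hUD : UniqueDiffOn ℝ (Set.Icc (x 0) (x N)) := uniqueDiffOn_Icc hxx
  have hpi := Real.pi_pos
  set a : ℕ → ℝ := fun n => (x n - x (n - 1)) / (x N - x 0) with ha
  set b : ℕ → ℝ := fun n => (x N * x (n - 1) - x 0 * x n) / (x N - x 0) with hb
  have hhn : ∀ m, 1 ≤ m → m ≤ N → 0 < x m - x (m-1) := by
    intro m h1 h2
    have := xmono_strict hx (m-1) m (by omega) h2
    linarith
  have hapos : ∀ m, 1 ≤ m → m ≤ N → 0 < a m := by
    intro m h1 h2
    exact div_pos (hhn m h1 h2) hH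
  have hμle : ∀ m, 1 ≤ m → m ≤ N → μ ≤ a m := by
    intro m h1 h2
    rw [hμ]
    exact Finset.inf'_le _ (Finset.mem_Icc.mpr ⟨h1, h2⟩)
  have hμpos : 0 < μ := by
    rw [hμ, Finset.lt_inf'_iff]
    intro m hm
    rw [Finset.mem_Icc] at hm
    exact hapos m hm.1 hm.2
  have hμk : 0 < μ ^ (2*k) := pow_pos hμpos _
  have hαle : ∀ m, 1 ≤ m → m ≤ N → |α m| ≤ Aα := by
    intro m h1 h2
    rw [hAα]
    exact Finset.le_sup' (fun n => |α n|) (Finset.mem_Icc.mpr ⟨h1, h2⟩)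
  have hAα0 : 0 ≤ Aα := le_trans (abs_nonneg _) (hαle n hn1 hn2)
  have hak : ∀ m, 1 ≤ m → m ≤ N → μ^(2*k) ≤ (a m)^(2*k) := by
    intro m h1 h2
    exact pow_le_pow_left₀ (le_of_lt hμpos) (hμle m h1 h2) _
  have hx0le : ∀ m, 1 ≤ m → m ≤ N → x 0 ≤ x (m-1) ∧ x m ≤ x N := by
    intro m h1 h2
    exact ⟨xmono hx 0 (m-1) (by omega) (by omega), xmono hx m N h2 le_rfl⟩
  have hρy0 : ∀ l ≤ p, |y 0 l| ≤ ρ := by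
    intro l hl
    rw [hρ]
    exact le_trans (le_max_left _ _)
      (Finset.le_sup' (fun j => max |y 0 j| |y N j|) (Finset.mem_range.mpr (by omega)))
  have hρyN : ∀ l ≤ p, |y N l| ≤ ρ := by
    intro l hl
    rw [hρ]
    exact le_trans (le_max_right _ _)
      (Finset.le_sup' (fun j => max |y 0 j| |y N j|) (Finset.mem_range.mpr (by omega)))
  have hρ0 : 0 ≤ ρ := le_trans (abs_nonneg _) (hρy0 0 (by omega))
  -- ## Lidstone polynomial facts
  obtain ⟨P, hP, h0, hstep, hdeg⟩ := lidstone_poly hΛ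
  have hz : ∀ l, (P l).eval 0 = 0 := fun l => by rw [← hP]; exact lidstone_zero hΛ l
  have h1e : ∀ l, 1 ≤ l → (P l).eval 1 = 0 := fun l hl => by
    rw [← hP]; exact lidstone_at_one hΛ l hl
  have hbd : ∀ m, 1 ≤ m → ∀ z ∈ Set.Icc (0:ℝ) 1,
      |(P m).eval z| ≤ Real.pi/3 * (1/Real.pi^2)^m := by
    intro m hm z hz'
    obtain ⟨m', rfl⟩ : ∃ m', m = m'+1 := ⟨m-1, by omega⟩
    have h1 := lidstone_bound hΛ m' z hz'
    rw [hP] at h1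
    refine h1.trans ?_
    have hc : (0:ℝ) ≤ Real.pi/3 * (1/Real.pi^2)^(m'+1) := by positivity
    nlinarith [Real.sin_le_one (Real.pi * z), hc]
  -- ## interpolating polynomials
  set W : ℝ[X] := Gpoly P p (x 0) (x N) (fun l => y 0 l) (fun l => y N l) with hW
  set Ψ : ℕ → ℝ[X] := fun m =>
    Gpoly P p (x (m-1)) (x m) (fun l => y (m-1) l) (fun l => y m l) with hΨ
  have hψeval : ∀ m, ψ m = fun s => (Ψ m).eval s := by
    intro m
    funext s
    rw [hψ m s]
    show _ = eval s (Gpoly P p (x (m-1)) (x m) (fun l => y (m-1) l) (fun l => y m l))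
    rw [Gpoly_eval]
    exact Finset.sum_congr rfl fun l _ => by rw [hP, hP]
  have hψderiv : ∀ m s, iteratedDeriv (2*k) (ψ m) s = eval s (derivative^[2*k] (Ψ m)) := by
    intro m s
    rw [hψeval m, poly_iteratedDeriv]
  set Gn : ℕ → ℝ[X] := fun m => Gpoly P p (x 0) (x N)
    (fun l => (a m)^(2*l) * y (m-1) l) (fun l => (a m)^(2*l) * y m l) with hGn
  have hcomp : ∀ m, 1 ≤ m → m ≤ N → Gn m = (Ψ m).comp (C (a m) * X + C (b m)) := by
    intro m h1 h2
    have hmne := ne_of_gt (hhn m h1 h2)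
    have hHne := ne_of_gt hH
    apply Polynomial.funext
    intro s
    rw [Polynomial.eval_comp]
    simp only [eval_add, eval_mul, eval_C, eval_X]
    show eval s (Gpoly P p (x 0) (x N) _ _) = eval _ (Gpoly P p (x (m-1)) (x m) _ _)
    rw [Gpoly_eval, Gpoly_eval]
    apply Finset.sum_congr rfl
    intro l _
    have harg1 : (x m - (a m * s + b m))/(x m - x (m-1)) = (x N - s)/(x N - x 0) := by
      rw [ha, hb]
      field_simp
      ring
    have harg2 : ((a m * s + b m) - x (m-1))/(x m - x (m-1)) = (s - x 0)/(x N - x 0) := by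
      rw [ha, hb]
      field_simp
      ring
    have hpow : (x m - x (m-1))^(2*l) = (a m)^(2*l) * (x N - x 0)^(2*l) := by
      rw [ha, div_pow]
      field_simp
    rw [harg1, harg2, hpow]
    ring
  have hqpoly : ∀ m, 1 ≤ m → m ≤ N →
      q m = fun s => eval s (Gn m - C (α m) * W) := by
    intro m h1 h2
    obtain ⟨⟨Q, hQdeg, hQeval⟩, hqvals⟩ := hq m h1 h2
    have hqfun : q m = fun s => Q.eval s := funext hQeval
    have hqid : ∀ l ≤ p,
        eval (x 0) (derivative^[2*l] Q) = (a m)^(2*l) * y (m-1) l - α m * y 0 l ∧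
        eval (x N) (derivative^[2*l] Q) = (a m)^(2*l) * y m l - α m * y N l := by
      intro l hl
      have hv := hqvals l hl
      simp only [hqfun, poly_iteratedDeriv] at hv
      exact hv
    have hkey : Q - (Gn m - C (α m) * W) = 0 := by
      apply even_derivs_zero (ne_of_lt hxx) p
      · refine (Polynomial.natDegree_sub_le _ _).trans (max_le hQdeg ?_)
        refine (Polynomial.natDegree_sub_le _ _).trans
          (max_le (Gpoly_natDegree_le p _ _ _ _ hdeg) ?_)
        refine (Polynomial.natDegree_mul_le).trans ?_
        rw [Polynomial.natDegree_C, zero_add]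
        exact Gpoly_natDegree_le p _ _ _ _ hdeg
      · intro l hl
        rw [iterate_derivative_sub, iterate_derivative_sub,
          Polynomial.iterate_derivative_C_mul]
        simp only [eval_sub, eval_mul, eval_C]
        have e1 := Gpoly_eval_left (P := P) h0 hstep hz h1e p hxx
          (fun l => (a m)^(2*l) * y (m-1) l) (fun l => (a m)^(2*l) * y m l) hl
        have e2 := Gpoly_eval_right (P := P) h0 hstep hz h1e p hxx
          (fun l => (a m)^(2*l) * y (m-1) l) (fun l => (a m)^(2*l) * y m l) hl
        have e3 := Gpoly_eval_left (P := P) h0 hstep hz h1e p hxx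
          (fun l => y 0 l) (fun l => y N l) hl
        have e4 := Gpoly_eval_right (P := P) h0 hstep hz h1e p hxx
          (fun l => y 0 l) (fun l => y N l) hl
        rw [hGn, hW]
        constructor
        · rw [(hqid l hl).1, e1, e3]
          ring
        · rw [(hqid l hl).2, e2, e4]
          ring
    have hQeq : Q = Gn m - C (α m) * W := sub_eq_zero.mp hkey
    rw [hqfun, hQeq]
  -- ## derivative of the functional equation
  have hsmooth' : ContDiffOn ℝ ((2*p : ℕ)) ℓ (Set.Icc (x 0) (x N)) :=
    hℓsmooth.of_le (by push_cast; exact le_refl _)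
  have hkp' : ((2*k : ℕ) : WithTop ℕ∞) ≤ ((2*k : ℕ) : WithTop ℕ∞) := le_refl _
  have hgcont : ContinuousOn (iteratedDerivWithin (2*k) ℓ (Set.Icc (x 0) (x N)))
      (Set.Icc (x 0) (x N)) :=
    hsmooth'.continuousOn_iteratedDerivWithin
      (by exact_mod_cast (by omega : 2*k ≤ 2*p)) hUD
  set g := iteratedDerivWithin (2*k) ℓ (Set.Icc (x 0) (x N)) with hg
  have hLmaps : ∀ m, 1 ≤ m → m ≤ N →
      Set.MapsTo (fun z => a m * z + b m) (Set.Icc (x 0) (x N)) (Set.Icc (x 0) (x N)) := by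
    intro m h1 h2 z hz
    have hx0' : a m * x 0 + b m = x (m-1) := by
      rw [ha, hb]; field_simp; ring
    have hxN' : a m * x N + b m = x m := by
      rw [ha, hb]; field_simp; ring
    have hap := hapos m h1 h2
    obtain ⟨hle1, hle2⟩ := hx0le m h1 h2
    have k1 : a m * x 0 ≤ a m * z := mul_le_mul_of_nonneg_left hz.1 (le_of_lt hap)
    have k2 : a m * z ≤ a m * x N := mul_le_mul_of_nonneg_left hz.2 (le_of_lt hap)
    exact ⟨by simp only; linarith, by simp only; linarith⟩
  have hℓk : ContDiffOn ℝ ((2*k : ℕ)) ℓ (Set.Icc (x 0) (x N)) :=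
    hsmooth'.of_le (by exact_mod_cast (by omega : 2*k ≤ 2*p))
  have hfe : ∀ m, 1 ≤ m → m ≤ N → ∀ s ∈ Set.Icc (x 0) (x N),
      (a m)^(2*k) * g (a m * s + b m)
        = α m * g s + eval s (derivative^[2*k] (Gn m - C (α m) * W)) := by
    intro m h1 h2 s hs
    have hEq : Set.EqOn (fun z => ℓ (a m * z + b m)) (fun z => α m * ℓ z + q m z)
        (Set.Icc (x 0) (x N)) := by
      intro z hz
      have h3 := hℓ m h1 h2 z hz
      rw [hL m z] at h3
      exact h3
    have hLHS := iteratedDerivWithin_comp_affine hxx hsmooth' (hLmaps m h1 h2)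
      (2*k) (by omega) s hs
    have hcongr := (iteratedDerivWithin_congr (n := 2*k) hEq) hs
    have hC2 : ContDiffOn ℝ ((2*k : ℕ)) (q m) (Set.Icc (x 0) (x N)) := by
      rw [hqpoly m h1 h2]
      exact (poly_contDiff _).contDiffOn
    have hRHS : iteratedDerivWithin (2*k) (fun z => α m * ℓ z + q m z)
        (Set.Icc (x 0) (x N)) s
        = α m * g s + eval s (derivative^[2*k] (Gn m - C (α m) * W)) := by
      have hadd : iteratedDerivWithin (2*k)
          (fun z => α m * ℓ z + q m z) (Set.Icc (x 0) (x N)) s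
          = iteratedDerivWithin (2*k) (fun z => α m * ℓ z) (Set.Icc (x 0) (x N)) s
            + iteratedDerivWithin (2*k) (fun z => q m z) (Set.Icc (x 0) (x N)) s := by
        exact iteratedDerivWithin_add hs hUD
          ((ContDiffOn.mul contDiffOn_const hℓk) s hs) (hC2 s hs)
      have e1 : iteratedDerivWithin (2*k) (fun z => α m * ℓ z)
          (Set.Icc (x 0) (x N)) s = α m * g s :=
        iteratedDerivWithin_const_mul hs hUD (α m) (hℓk s hs)
      have e2 : iteratedDerivWithin (2*k) (fun z => q m z) (Set.Icc (x 0) (x N)) s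
          = eval s (derivative^[2*k] (Gn m - C (α m) * W)) := by
        have hq2 : (fun z => q m z) = fun z => eval z (Gn m - C (α m) * W) := by
          rw [← hqpoly m h1 h2]
        rw [hq2]
        exact poly_iteratedDerivWithin _ _ hUD s hs
      rw [hadd, e1, e2]
    rw [← hRHS, ← hcongr, hLHS]
  -- ## error identity
  have herr : ∀ m, 1 ≤ m → m ≤ N → ∀ u ∈ Set.Ioo (x (m-1)) (x m),
      ∃ s ∈ Set.Ioo (x 0) (x N),
        (a m)^(2*k) * (g u - eval u (derivative^[2*k] (Ψ m)))
          = α m * (g s - eval s (derivative^[2*k] W)) := by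
    intro m h1 h2 u hu
    have hap := hapos m h1 h2
    have hx0' : a m * x 0 + b m = x (m-1) := by
      rw [ha, hb]; field_simp; ring
    have hxN' : a m * x N + b m = x m := by
      rw [ha, hb]; field_simp; ring
    set s := (u - b m)/(a m) with hsdef
    have hsu : a m * s + b m = u := by
      rw [hsdef]; field_simp
      ring
    have hsIoo : s ∈ Set.Ioo (x 0) (x N) := by
      constructor
      · have h3 : a m * x 0 < a m * s := by linarith [hu.1]
        exact (mul_lt_mul_iff_right₀ hap).mp h3
      · have h3 : a m * s < a m * x N := by linarith [hu.2]
        exact (mul_lt_mul_iff_right₀ hap).mp h3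
    refine ⟨s, hsIoo, ?_⟩
    have hfe' := hfe m h1 h2 s ⟨le_of_lt hsIoo.1, le_of_lt hsIoo.2⟩
    rw [hsu] at hfe'
    have hsplit : eval s (derivative^[2*k] (Gn m - C (α m) * W))
        = (a m)^(2*k) * eval u (derivative^[2*k] (Ψ m))
          - α m * eval s (derivative^[2*k] W) := by
      rw [iterate_derivative_sub, Polynomial.iterate_derivative_C_mul,
        eval_sub, eval_mul, eval_C]
      congr 1
      rw [hcomp m h1 h2, iterate_derivative_comp_affine]
      rw [eval_smul, smul_eq_mul, eval_comp]
      simp only [eval_add, eval_mul, eval_C, eval_X]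
      rw [hsu]
    rw [hsplit] at hfe'
    linear_combination hfe'
  -- ## sup machinery
  have hIoom : ∀ m, 1 ≤ m → m ≤ N →
      Set.Ioo (x (m-1)) (x m) ⊆ Set.Icc (x 0) (x N) := by
    intro m h1 h2
    obtain ⟨hle1, hle2⟩ := hx0le m h1 h2
    exact subset_trans Set.Ioo_subset_Icc_self (Set.Icc_subset_Icc hle1 hle2)
  have hbnd : ∀ m : ℕ, ∃ Dm : ℝ, ∀ z ∈ Set.Icc (x 0) (x N),
      |eval z (derivative^[2*k] (Ψ m))| ≤ Dm := by
    intro m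
    obtain ⟨Dm, hDm⟩ := (isCompact_Icc (a := x 0) (b := x N)).exists_bound_of_continuousOn
      ((Polynomial.continuous (derivative^[2*k] (Ψ m))).continuousOn)
    exact ⟨Dm, fun z hz => by simpa [Real.norm_eq_abs] using hDm z hz⟩
  choose D hD using hbnd
  obtain ⟨Cg, hCg0⟩ := (isCompact_Icc (a := x 0) (b := x N)).exists_bound_of_continuousOn hgcont
  have hCg : ∀ z ∈ Set.Icc (x 0) (x N), |g z| ≤ Cg := fun z hz => by
    simpa [Real.norm_eq_abs] using hCg0 z hz
  set DD := (Finset.Icc 1 N).sup' (Finset.nonempty_Icc.mpr hN) D with hDD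
  have hDDle : ∀ m, 1 ≤ m → m ≤ N → D m ≤ DD := fun m h1 h2 =>
    Finset.le_sup' D (Finset.mem_Icc.mpr ⟨h1, h2⟩)
  set M : ℝ := (2 * ρ * Real.pi / 3) *
    ∑ l ∈ Finset.range (p - k + 1), ((x N - x 0) / Real.pi) ^ (2 * l) with hM
  set Sset : Set ℝ := {r : ℝ | ∃ m, 1 ≤ m ∧ m ≤ N ∧
    ∃ s ∈ Set.Ioo (x (m - 1)) (x m), r = |iteratedDeriv (2 * k) (ψ m) s|} with hSset
  set Eset : Set ℝ := {r : ℝ | ∃ m, 1 ≤ m ∧ m ≤ N ∧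
    ∃ s ∈ Set.Ioo (x (m - 1)) (x m), r = |g s - eval s (derivative^[2*k] (Ψ m))|} with hEset
  have hSne : Sset.Nonempty := ⟨|iteratedDeriv (2*k) (ψ n) t|, n, hn1, hn2, t, ht, rfl⟩
  have hEne : Eset.Nonempty :=
    ⟨|g t - eval t (derivative^[2*k] (Ψ n))|, n, hn1, hn2, t, ht, rfl⟩
  have hSbdd : BddAbove Sset := by
    refine ⟨DD, ?_⟩
    rintro r ⟨m, h1, h2, s, hs, rfl⟩
    rw [hψderiv]
    exact le_trans (hD m s (hIoom m h1 h2 hs)) (hDDle m h1 h2)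
  have hEbdd : BddAbove Eset := by
    refine ⟨Cg + DD, ?_⟩
    rintro r ⟨m, h1, h2, s, hs, rfl⟩
    have h3 := hCg s (hIoom m h1 h2 hs)
    have h4 := le_trans (hD m s (hIoom m h1 h2 hs)) (hDDle m h1 h2)
    calc |g s - eval s (derivative^[2*k] (Ψ m))|
        ≤ |g s| + |eval s (derivative^[2*k] (Ψ m))| := abs_sub _ _
      _ ≤ Cg + DD := add_le_add h3 h4
  set S := sSup Sset with hS
  set E := sSup Eset with hE
  have hS0 : 0 ≤ S :=
    le_trans (abs_nonneg _) (le_csSup hSbdd ⟨n, hn1, hn2, t, ht, rfl⟩)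
  have hE0 : 0 ≤ E :=
    le_trans (abs_nonneg _) (le_csSup hEbdd ⟨n, hn1, hn2, t, ht, rfl⟩)
  have hM0 : 0 ≤ M := by
    rw [hM]
    apply mul_nonneg (by positivity)
    exact Finset.sum_nonneg fun l _ =>
      pow_nonneg (div_nonneg (le_of_lt hH) (le_of_lt hpi)) _
  -- ## key estimate
  have hkey : ∀ r ∈ Eset, r ≤ Aα / μ^(2*k) * (E + (S + M)) := by
    rintro r ⟨m, h1, h2, u, hu, rfl⟩
    obtain ⟨s, hsIoo, hids⟩ := herr m h1 h2 u hu
    obtain ⟨m', hm'1, hm'2, hm'l, hm'r⟩ := locate hN (le_of_lt hsIoo.1) hsIoo.2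
    have hxm' : x (m'-1) < x m' := lt_of_le_of_lt hm'l hm'r
    have hsIco : s ∈ Set.Ico (x (m'-1)) (x m') := ⟨hm'l, hm'r⟩
    have hsIcc : s ∈ Set.Icc (x 0) (x N) := ⟨le_of_lt hsIoo.1, le_of_lt hsIoo.2⟩
    have hT1 : |g s - eval s (derivative^[2*k] (Ψ m'))| ≤ E := by
      apply le_on_boundary hxm' hsIco
      · have hcont : ContinuousOn (fun z => |g z - eval z (derivative^[2*k] (Ψ m'))|)
            (Set.Icc (x 0) (x N)) :=
          (hgcont.sub ((Polynomial.continuous _).continuousOn)).abs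
        exact (hcont s hsIcc).mono (hIoom m' hm'1 hm'2)
      · intro z hz
        exact le_csSup hEbdd ⟨m', hm'1, hm'2, z, hz, rfl⟩
    have hT2 : |eval s (derivative^[2*k] (Ψ m'))| ≤ S := by
      apply le_on_boundary hxm' hsIco
      · exact ((Polynomial.continuous _).abs.continuousAt).continuousWithinAt
      · intro z hz
        refine le_csSup hSbdd ⟨m', hm'1, hm'2, z, hz, ?_⟩
        rw [hψderiv]
    have hT3 : |eval s (derivative^[2*k] W)| ≤ M := by
      rw [hM, hW]
      exact Gpoly_bound h0 hstep hbd p k hk1 hk2 hxx hρy0 hρyN s hsIcc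
    have hXle : |g s - eval s (derivative^[2*k] W)| ≤ E + (S + M) := by
      have htri := abs_sub_le (g s) (eval s (derivative^[2*k] (Ψ m')))
        (eval s (derivative^[2*k] W))
      have htri2 := abs_sub (eval s (derivative^[2*k] (Ψ m')))
        (eval s (derivative^[2*k] W))
      linarith
    have h5 : |g u - eval u (derivative^[2*k] (Ψ m))| * (a m)^(2*k)
        = |α m| * |g s - eval s (derivative^[2*k] W)| := by
      calc |g u - eval u (derivative^[2*k] (Ψ m))| * (a m)^(2*k)
          = |(a m)^(2*k) * (g u - eval u (derivative^[2*k] (Ψ m)))| := by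
            rw [abs_mul, abs_of_pos (pow_pos (hapos m h1 h2) (2*k))]
            ring
        _ = |α m * (g s - eval s (derivative^[2*k] W))| := by rw [hids]
        _ = _ := abs_mul _ _
    rw [div_mul_eq_mul_div, le_div_iff₀ hμk]
    have h6 : |g u - eval u (derivative^[2*k] (Ψ m))| * μ^(2*k)
        ≤ |g u - eval u (derivative^[2*k] (Ψ m))| * (a m)^(2*k) :=
      mul_le_mul_of_nonneg_left (hak m h1 h2) (abs_nonneg _)
    have h7 : |α m| * |g s - eval s (derivative^[2*k] W)| ≤ Aα * (E + (S + M)) :=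
      mul_le_mul (hαle m h1 h2) hXle (abs_nonneg _) hAα0
    linarith
  have hEle : E ≤ Aα / μ^(2*k) * (E + (S + M)) := csSup_le hEne hkey
  have hfinal : E ≤ Aα / (μ^(2*k) - Aα) * (S + M) := by
    have hpos : 0 < μ^(2*k) - Aα := by linarith
    rw [div_mul_eq_mul_div, le_div_iff₀ hpos]
    rw [div_mul_eq_mul_div, le_div_iff₀ hμk] at hEle
    nlinarith
  rw [hψderiv n t]
  exact le_trans (le_csSup hEbdd ⟨n, hn1, hn2, t, ht, rfl⟩) hfinal
end

section
/- Let p ≥ 1, let g : [x_0,x_N] → ℝ be 2p-times continuously differentiable, and let k be an integer with 1 ≤ k ≤ p. Then there exists a constant C > 0, depending only on g, p, k, x_0 and x_N, with the following property: for every integer N ≥ 2, taking the uniform partition x_n = x_0 + n(x_N − x_0)/N and the data y_{n,2k} = g^{(2k)}(x_n) (0 ≤ n ≤ N, 0 ≤ k ≤ p), every scaling vector α with max_n |α_n| ≤ (1/2) N^{−2p}, and every 2p-times continuously differentiable function ℓ_α on [x_0,x_N] satisfying ℓ_α(L_n(x)) = α_n ℓ_α(x) + q_n(α_n, x) for all x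 ∈ [x_0,x_N] and 1 ≤ n ≤ N, one has sup_{x ∈ [x_0,x_N]} |g^{(2k)}(x) − ℓ_α^{(2k)}(x)| ≤ C · N^{−(2p−2k)}. -/
open Set Filter Topology

open Set

/-- Locate a point of `[x 0, x N]` in a subinterval of a monotone partition. -/
lemma lid_find_subinterval (x : ℕ → ℝ) (hmono : ∀ n, x n ≤ x (n+1)) :
    ∀ N : ℕ, 1 ≤ N → ∀ t ∈ Icc (x 0) (x N),
      ∃ n, 1 ≤ n ∧ n ≤ N ∧ x (n-1) ≤ t ∧ t ≤ x n := by
  intro N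
  induction N with
  | zero => omega
  | succ N IH =>
    intro _ t ht
    rcases le_or_gt t (x N) with h | h
    · rcases Nat.eq_zero_or_pos N with rfl | hN'
      · exact ⟨1, le_refl _, le_refl _, ht.1, ht.2⟩
      · obtain ⟨n, h1, h2, h3, h4⟩ := IH hN' t ⟨ht.1, h⟩
        exact ⟨n, h1, h2.trans (Nat.le_succ N), h3, h4⟩
    · exact ⟨N+1, Nat.le_add_left _ _, le_refl _, by simpa using h.le, ht.2⟩

lemma lid_iteratedDeriv_polyEval (m : ℕ) (P : Polynomial ℝ) :
    iteratedDeriv m (fun t => P.eval t) = fun t => (Polynomial.derivative^[m] P).eval t := by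
  induction m with
  | zero => simp
  | succ m IH =>
    rw [iteratedDeriv_succ, IH]
    funext t
    rw [Function.iterate_succ_apply']
    exact Polynomial.deriv (p := Polynomial.derivative^[m] P)

lemma lid_natDegree_iterate_derivative_le (P : Polynomial ℝ) (n : ℕ) (hP : P.natDegree ≤ n)
    (m : ℕ) : (Polynomial.derivative^[m] P).natDegree ≤ n - m := by
  induction m with
  | zero => simpa using hP
  | succ m IH =>
    rw [Function.iterate_succ_apply']
    exact (Polynomial.natDegree_derivative_le _).trans (by omega)

/-- An affine polynomial is bounded on `[a,b]` by its endpoint values. -/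
lemma lid_affine_poly_bound (P : Polynomial ℝ) (hP : P.natDegree ≤ 1) (a b : ℝ) (hab : a < b)
    (t : ℝ) (ht : t ∈ Icc a b) : |P.eval t| ≤ max |P.eval a| |P.eval b| := by
  have h2 : P.natDegree < 2 := by omega
  have hev : ∀ u : ℝ, P.eval u = P.coeff 0 + P.coeff 1 * u := by
    intro u
    rw [Polynomial.eval_eq_sum_range' h2]
    simp [Finset.sum_range_succ]
  have hba : b - a ≠ 0 := sub_ne_zero.mpr hab.ne'
  have hrep : P.eval t = ((b - t)/(b-a)) * P.eval a + ((t - a)/(b-a)) * P.eval b := by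
    rw [hev, hev, hev]; field_simp; ring
  have h1 : (0:ℝ) ≤ (b - t)/(b-a) := by
    apply div_nonneg (by linarith [ht.2]) (by linarith)
  have h2' : (0:ℝ) ≤ (t - a)/(b-a) := by
    apply div_nonneg (by linarith [ht.1]) (by linarith)
  have hsum : (b - t)/(b-a) + (t - a)/(b-a) = 1 := by field_simp; ring
  calc |P.eval t| ≤ ((b - t)/(b-a)) * |P.eval a| + ((t - a)/(b-a)) * |P.eval b| := by
        rw [hrep]
        refine (abs_add_le _ _).trans ?_
        rw [abs_mul, abs_mul, abs_of_nonneg h1, abs_of_nonneg h2']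
    _ ≤ ((b - t)/(b-a)) * (max |P.eval a| |P.eval b|) + ((t - a)/(b-a)) * (max |P.eval a| |P.eval b|) := by
        gcongr
        · exact le_max_left _ _
        · exact le_max_right _ _
    _ = max |P.eval a| |P.eval b| := by rw [← add_mul, hsum, one_mul]

/-- `iteratedDerivWithin` on a closed subinterval agrees with that on the big interval. -/
lemma lid_iteratedDerivWithin_Icc_subset {f : ℝ → ℝ} {a b a' b' : ℝ} (hab : a < b)
    (ha : a ≤ a') (hb : b' ≤ b) (hab' : a' < b') {M : ℕ} (hf : ContDiffOn ℝ M f (Icc a b)) :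
    ∀ m ≤ M, ∀ u ∈ Icc a' b',
      iteratedDerivWithin m f (Icc a' b') u = iteratedDerivWithin m f (Icc a b) u := by
  have hsub : Icc a' b' ⊆ Icc a b := Icc_subset_Icc ha hb
  intro m
  induction m with
  | zero => simp
  | succ m IH =>
    intro hm u hu
    have hus : UniqueDiffWithinAt ℝ (Icc a' b') u := (uniqueDiffOn_Icc hab').uniqueDiffWithinAt hu
    rw [iteratedDerivWithin_succ,
      iteratedDerivWithin_succ]
    rw [derivWithin_congr (fun v hv => IH (by omega) v hv) (IH (by omega) u hu)]
    exact derivWithin_subset hsub hus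
      (hf.differentiableOn_iteratedDerivWithin (by exact_mod_cast (by omega : m < M))
        (uniqueDiffOn_Icc hab) u (hsub hu))

/-- For a polynomial function, `iteratedDerivWithin` on `Icc` equals `iteratedDeriv`. -/
lemma lid_iteratedDerivWithin_polyEval {a b : ℝ} (hab : a < b) (P : Polynomial ℝ) :
    ∀ m : ℕ, ∀ u ∈ Icc a b,
      iteratedDerivWithin m (fun t => P.eval t) (Icc a b) u
        = iteratedDeriv m (fun t => P.eval t) u := by
  intro m
  induction m with
  | zero => simp
  | succ m IH =>
    intro u hu
    have hus : UniqueDiffWithinAt ℝ (Icc a b) u := (uniqueDiffOn_Icc hab).uniqueDiffWithinAt hu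
    rw [iteratedDerivWithin_succ, iteratedDeriv_succ]
    rw [derivWithin_congr (fun v hv => IH v hv) (IH u hu)]
    refine DifferentiableAt.derivWithin ?_ hus
    rw [lid_iteratedDeriv_polyEval]
    exact (Polynomial.differentiable _).differentiableAt
open Set

lemma lid_comp_affine {f : ℝ → ℝ} {c d A B A' B' : ℝ} (hc : 0 < c) (hAB : A < B)
    (hA' : c * A + d = A') (hB' : c * B + d = B') {M : ℕ}
    (hf : ContDiffOn ℝ M f (Icc A' B')) :
    ∀ m ≤ M, ∀ t ∈ Icc A B,
      iteratedDerivWithin m (fun u => f (c * u + d)) (Icc A B) t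
        = c ^ m * iteratedDerivWithin m f (Icc A' B') (c * t + d) := by
  have hAB' : A' < B' := by
    rw [← hA', ← hB']
    have := mul_lt_mul_of_pos_left hAB hc
    linarith
  have hmaps : ∀ t ∈ Icc A B, c * t + d ∈ Icc A' B' := by
    intro t ht
    constructor
    · rw [← hA']; have := mul_le_mul_of_nonneg_left ht.1 hc.le; linarith
    · rw [← hB']; have := mul_le_mul_of_nonneg_left ht.2 hc.le; linarith
  have hmapsTo : MapsTo (fun u => c * u + d) (Icc A B) (Icc A' B') := fun t ht => hmaps t ht
  intro m
  induction m with
  | zero => intro _ t _; simp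
  | succ m IH =>
    intro hm t ht
    have hus : UniqueDiffWithinAt ℝ (Icc A B) t := (uniqueDiffOn_Icc hAB).uniqueDiffWithinAt ht
    have hmM : (m : WithTop ℕ∞) < M := by exact_mod_cast (by omega : m < M)
    have hdm : DifferentiableOn ℝ (iteratedDerivWithin m f (Icc A' B')) (Icc A' B') :=
      hf.differentiableOn_iteratedDerivWithin hmM (uniqueDiffOn_Icc hAB')
    have he : HasDerivAt (fun u : ℝ => c * u + d) c t := by
      simpa using ((hasDerivAt_id t).const_mul c).add_const d
    have hinner : DifferentiableWithinAt ℝ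
        (fun u => iteratedDerivWithin m f (Icc A' B') (c * u + d)) (Icc A B) t := by
      exact (hdm _ (hmaps t ht)).comp t he.differentiableAt.differentiableWithinAt hmapsTo
    rw [iteratedDerivWithin_succ]
    rw [derivWithin_congr (fun v hv => IH (by omega) v hv) (IH (by omega) t ht)]
    rw [derivWithin_const_mul _ hinner]
    have hcomp : derivWithin (fun u => iteratedDerivWithin m f (Icc A' B') (c * u + d))
        (Icc A B) t
        = derivWithin (iteratedDerivWithin m f (Icc A' B')) (Icc A' B') (c * t + d) * c := by
      have := derivWithin_comp (h₂ := iteratedDerivWithin m f (Icc A' B'))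
        (h := fun u : ℝ => c * u + d) (x := t) (hdm _ (hmaps t ht))
        he.differentiableAt.differentiableWithinAt hmapsTo
      rw [show (fun u => iteratedDerivWithin m f (Icc A' B') (c * u + d))
          = iteratedDerivWithin m f (Icc A' B') ∘ fun u => c * u + d from rfl, this,
        he.differentiableAt.derivWithin hus, he.deriv]
    rw [hcomp, ← iteratedDerivWithin_succ]
    ring
lemma lid_contDiff_polyEval (P : Polynomial ℝ) (m : ℕ) : ContDiff ℝ m fun x => P.eval x := by
  induction P using Polynomial.induction_on' with
  | add p q hp hq => simpa [Polynomial.eval_add] using hp.add hq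
  | monomial n c =>
    simpa [Polynomial.eval_monomial] using (contDiff_const (c := c)).mul (contDiff_id.pow n)

set_option maxHeartbeats 3000000 in

/-- Convergence of the even-order derivatives of the Lidstone FIF to the
corresponding derivatives of the data generating function: if `g` is `2p`-times
continuously differentiable on `[a, b]` and `1 ≤ k ≤ p`, then there is `C > 0`
such that for every `N ≥ 2`, every scaling vector with `|α n| ≤ (1/2) N^(-2p)`
and the uniform partition `x n = a + n (b - a)/N`, any `2p`-times continuously
differentiable Lidstone FIF `ℓ_α` for the data `y n l = g^(2l) (x n)` satisfies
`‖g^(2k) - ℓ_α^(2k)‖_∞ ≤ C · N^(-(2p-2k))`. -/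
theorem lidstone_FIF_derivative_convergence
    (p : ℕ) (hp : 1 ≤ p) (a b : ℝ) (hab : a < b)
    (g : ℝ → ℝ) (hg : ContDiffOn ℝ (2 * p) g (Set.Icc a b))
    (k : ℕ) (hk1 : 1 ≤ k) (hk2 : k ≤ p) :
    ∃ C : ℝ, 0 < C ∧
      ∀ (N : ℕ), 2 ≤ N →
      ∀ x : ℕ → ℝ, (∀ n, x n = a + n * (b - a) / N) →
      ∀ L : ℕ → ℝ → ℝ,
        (∀ n t, L n t = ((x n - x (n - 1)) / (x N - x 0)) * t +
          (x N * x (n - 1) - x 0 * x n) / (x N - x 0)) →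
      ∀ α : ℕ → ℝ,
        (∀ n, 1 ≤ n → n ≤ N → |α n| ≤ (1 / 2) * ((N : ℝ) ^ (2 * p))⁻¹) →
      ∀ q : ℕ → ℝ → ℝ,
        (∀ n, 1 ≤ n → n ≤ N →
          (∃ P : Polynomial ℝ, P.natDegree ≤ 2 * p + 1 ∧ ∀ t, q n t = P.eval t) ∧
          ∀ l ≤ p,
            iteratedDeriv (2 * l) (q n) (x 0) =
              ((x n - x (n - 1)) / (x N - x 0)) ^ (2 * l) *
                iteratedDerivWithin (2 * l) g (Set.Icc a b) (x (n - 1)) -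
              α n * iteratedDerivWithin (2 * l) g (Set.Icc a b) (x 0) ∧
            iteratedDeriv (2 * l) (q n) (x N) =
              ((x n - x (n - 1)) / (x N - x 0)) ^ (2 * l) *
                iteratedDerivWithin (2 * l) g (Set.Icc a b) (x n) -
              α n * iteratedDerivWithin (2 * l) g (Set.Icc a b) (x N)) →
      ∀ ℓ : ℝ → ℝ,
        ContDiffOn ℝ (2 * p) ℓ (Set.Icc a b) →
        (∀ n, 1 ≤ n → n ≤ N → ∀ t ∈ Set.Icc a b, ℓ (L n t) = α n * ℓ t + q n t) →
        ∀ t ∈ Set.Icc a b,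
          |iteratedDerivWithin (2 * k) g (Set.Icc a b) t -
              iteratedDerivWithin (2 * k) ℓ (Set.Icc a b) t| ≤
            C * ((N : ℝ) ^ (2 * p - 2 * k))⁻¹ := by
  have hc : (0:ℝ) < b - a := by linarith
  have uds : UniqueDiffOn ℝ (Icc a b) := uniqueDiffOn_Icc hab
  obtain ⟨G0, hG0⟩ := isCompact_Icc.exists_bound_of_continuousOn
    (hg.continuousOn_iteratedDerivWithin le_rfl uds)
  set G : ℝ := max G0 0 with hGdef
  have hG : ∀ u ∈ Icc a b, |iteratedDerivWithin (2*p) g (Icc a b) u| ≤ G := by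
    intro u hu
    have := hG0 u hu
    rw [Real.norm_eq_abs] at this
    exact this.trans (le_max_left _ _)
  have hGnn : (0:ℝ) ≤ G := le_max_right _ _
  have hba1 : (0:ℝ) < (b - a) + 1 := by linarith
  refine ⟨(4*G+4) * ((b-a)+1)^(2*p), by positivity, ?_⟩
  intro N hN x hx L hL α hα q hq ℓ hℓ hfe t ht
  have hN0 : (0:ℝ) < N := by positivity
  have hNne : (N:ℝ) ≠ 0 := hN0.ne'
  have hN1 : (1:ℝ) ≤ N := by exact_mod_cast Nat.one_le_of_lt hN
  have hx0 : x 0 = a := by simp [hx]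
  have hxN : x N = b := by rw [hx]; field_simp; ring
  have hstep : ∀ n : ℕ, 1 ≤ n → x n = x (n-1) + (b-a)/N := by
    intro n hn
    rw [hx, hx]
    have h1 : ((n-1:ℕ):ℝ) = (n:ℝ) - 1 := by
      rw [Nat.cast_sub hn]; norm_num
    rw [h1]; field_simp; ring
  have hmono : ∀ n : ℕ, x n ≤ x (n+1) := by
    intro n
    rw [hx, hx]
    have h0 : (0:ℝ) ≤ (b-a)/N := by positivity
    have h1 : ((n:ℕ)+1:ℝ) * (b-a)/N = (n:ℝ)*(b-a)/N + (b-a)/N := by ring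
    push_cast
    linarith
  have hxmem : ∀ n : ℕ, n ≤ N → x n ∈ Icc a b := by
    intro n hn
    rw [hx]
    constructor
    · have : (0:ℝ) ≤ (n:ℝ) * (b-a)/N := by positivity
      linarith
    · have h1 : (n:ℝ) ≤ N := by exact_mod_cast hn
      have h2 : (n:ℝ)*(b-a)/N ≤ b - a := by
        rw [div_le_iff₀ hN0]; nlinarith
      linarith
  have hxlt : ∀ n : ℕ, 1 ≤ n → x (n-1) < x n := by
    intro n hn
    rw [hstep n hn]
    have : (0:ℝ) < (b-a)/N := by positivity
    linarith
  have hLform : ∀ n : ℕ, 1 ≤ n → ∀ u : ℝ, L n u = (N:ℝ)⁻¹ * u + (x (n-1) - (N:ℝ)⁻¹ * a) := by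
    intro n hn u
    rw [hL, hstep n hn, hx0, hxN]
    field_simp
    ring
  have hcB : ∀ n : ℕ, 1 ≤ n → (N:ℝ)⁻¹ * b + (x (n-1) - (N:ℝ)⁻¹ * a) = x n := by
    intro n hn
    rw [hstep n hn]
    field_simp
    ring
  have hcA : ∀ n : ℕ, (N:ℝ)⁻¹ * a + (x (n-1) - (N:ℝ)⁻¹ * a) = x (n-1) := by
    intro n; ring
  have han : ∀ n : ℕ, 1 ≤ n → (x n - x (n-1)) / (x N - x 0) = (N:ℝ)⁻¹ := by
    intro n hn
    rw [hstep n hn, hx0, hxN]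
    field_simp
    ring
  have hLb : ∀ n : ℕ, 1 ≤ n → L n b = x n := by
    intro n hn; rw [hLform n hn, hcB n hn]
  have hLa : ∀ n : ℕ, 1 ≤ n → L n a = x (n-1) := by
    intro n hn; rw [hLform n hn, hcA n]
  have hLmem : ∀ n : ℕ, 1 ≤ n → ∀ u ∈ Icc a b, L n u ∈ Icc (x (n-1)) (x n) := by
    intro n hn u hu
    rw [hLform n hn]
    have hNi : (0:ℝ) ≤ (N:ℝ)⁻¹ := by positivity
    constructor
    · have := mul_le_mul_of_nonneg_left hu.1 hNi
      have h2 := hcA n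
      linarith
    · have := mul_le_mul_of_nonneg_left hu.2 hNi
      have h2 := hcB n hn
      linarith
  -- Step A : the differentiated functional equation
  have stepA : ∀ n : ℕ, 1 ≤ n → n ≤ N → ∀ m : ℕ, m ≤ 2*p → ∀ u ∈ Icc a b,
      ((N:ℝ)⁻¹)^m * iteratedDerivWithin m ℓ (Icc a b) (L n u)
        = α n * iteratedDerivWithin m ℓ (Icc a b) u + iteratedDeriv m (q n) u := by
    intro n hn1 hnN m hm u hu
    obtain ⟨P, hPdeg, hPq⟩ := (hq n hn1 hnN).1
    have hxa : a ≤ x (n-1) := (hxmem (n-1) (by omega)).1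
    have hxb : x n ≤ b := (hxmem n hnN).2
    have hℓsub : ContDiffOn ℝ (2*p) ℓ (Icc (x (n-1)) (x n)) :=
      hℓ.mono (Icc_subset_Icc hxa hxb)
    have hNi : (0:ℝ) < (N:ℝ)⁻¹ := by positivity
    have h1 := lid_comp_affine (f := ℓ) hNi hab (hcA n) (hcB n hn1) hℓsub m hm u hu
    have hLu : L n u = (N:ℝ)⁻¹ * u + (x (n-1) - (N:ℝ)⁻¹ * a) := hLform n hn1 u
    have h2 := lid_iteratedDerivWithin_Icc_subset hab hxa hxb (hxlt n hn1) hℓ m hm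
      (L n u) (hLmem n hn1 u hu)
    have h4 : iteratedDerivWithin m (fun v => ℓ (L n v)) (Icc a b) u
        = iteratedDerivWithin m (fun v => α n * ℓ v + q n v) (Icc a b) u :=
      iteratedDerivWithin_congr (fun v hv => hfe n hn1 hnN v hv) hu
    have hqP : q n = fun v => P.eval v := funext hPq
    have hq_cd : ContDiffOn ℝ m (q n) (Icc a b) := by
      rw [hqP]; exact (lid_contDiff_polyEval P m).contDiffOn
    have hℓm : ContDiffOn ℝ m ℓ (Icc a b) := hℓ.of_le (by exact_mod_cast hm)
    have hsmul : ContDiffOn ℝ m (fun v => α n * ℓ v) (Icc a b) := contDiffOn_const.mul hℓm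
    have h5 : iteratedDerivWithin m (fun v => α n * ℓ v + q n v) (Icc a b) u
        = α n * iteratedDerivWithin m ℓ (Icc a b) u + iteratedDeriv m (q n) u := by
      have hadd : (fun v => α n * ℓ v + q n v) = (fun v => α n * ℓ v) + (fun v => q n v) := rfl
      rw [hadd, iteratedDerivWithin_add hu uds (hsmul u hu) (hq_cd u hu),
        iteratedDerivWithin_const_mul hu uds (α n) (hℓm u hu)]
      congr 1
      have : iteratedDerivWithin m (fun v => q n v) (Icc a b) u
          = iteratedDeriv m (fun v => P.eval v) u := by
        rw [show (fun v => q n v) = fun v => P.eval v from hqP]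
        exact lid_iteratedDerivWithin_polyEval hab P m u hu
      rw [this, hqP]
    calc ((N:ℝ)⁻¹)^m * iteratedDerivWithin m ℓ (Icc a b) (L n u)
        = iteratedDerivWithin m (fun v => ℓ (L n v)) (Icc a b) u := by
          rw [← h2]
          rw [show (fun v => ℓ (L n v))
            = fun v => ℓ ((N:ℝ)⁻¹ * v + (x (n-1) - (N:ℝ)⁻¹ * a)) from
            funext fun v => by rw [hLform n hn1 v]]
          rw [h1, ← hLu]
      _ = iteratedDerivWithin m (fun v => α n * ℓ v + q n v) (Icc a b) u := h4
      _ = _ := h5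
  -- powers of N⁻¹
  have hpowle : ∀ l : ℕ, l ≤ p → ((N:ℝ)^(2*p))⁻¹ ≤ ((N:ℝ)⁻¹)^(2*l) := by
    intro l hl
    rw [← inv_pow]
    exact pow_le_pow_of_le_one (by positivity) (inv_le_one_of_one_le₀ hN1) (by omega)
  have hαlt : ∀ n : ℕ, 1 ≤ n → n ≤ N → ∀ l, l ≤ p → |α n| < ((N:ℝ)⁻¹)^(2*l) := by
    intro n h1 h2 l hl
    have h3 := hα n h1 h2
    have h4 := hpowle l hl
    have h5 : (0:ℝ) < ((N:ℝ)^(2*p))⁻¹ := by positivity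
    linarith
  have hb_node : ∀ l : ℕ, l ≤ p →
      iteratedDerivWithin (2*l) ℓ (Icc a b) b = iteratedDerivWithin (2*l) g (Icc a b) b := by
    intro l hl
    have hA := stepA N (by omega) le_rfl (2*l) (by omega) b (right_mem_Icc.mpr hab.le)
    rw [hLb N (by omega), hxN] at hA
    have hQ := ((hq N (by omega) le_rfl).2 l hl).2
    rw [han N (by omega), hxN] at hQ
    rw [hQ] at hA
    have hfac : (((N:ℝ)⁻¹)^(2*l) - α N) *
        (iteratedDerivWithin (2*l) ℓ (Icc a b) b
          - iteratedDerivWithin (2*l) g (Icc a b) b) = 0 := by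
      linear_combination hA
    rcases mul_eq_zero.mp hfac with h | h
    · exfalso
      have habs := hαlt N (by omega) le_rfl l hl
      rw [abs_lt] at habs
      have : α N = ((N:ℝ)⁻¹)^(2*l) := by linarith
      linarith [habs.2]
    · linarith
  have ha_node : ∀ l : ℕ, l ≤ p →
      iteratedDerivWithin (2*l) ℓ (Icc a b) a = iteratedDerivWithin (2*l) g (Icc a b) a := by
    intro l hl
    have hA := stepA 1 le_rfl (by omega) (2*l) (by omega) a (left_mem_Icc.mpr hab.le)
    rw [hLa 1 le_rfl] at hA
    simp only [Nat.sub_self] at hA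
    rw [hx0] at hA
    have hQ := ((hq 1 le_rfl (by omega)).2 l hl).1
    rw [han 1 le_rfl] at hQ
    simp only [Nat.sub_self] at hQ
    rw [hx0] at hQ
    rw [hQ] at hA
    have hfac : (((N:ℝ)⁻¹)^(2*l) - α 1) *
        (iteratedDerivWithin (2*l) ℓ (Icc a b) a
          - iteratedDerivWithin (2*l) g (Icc a b) a) = 0 := by
      linear_combination hA
    rcases mul_eq_zero.mp hfac with h | h
    · exfalso
      have habs := hαlt 1 le_rfl (by omega) l hl
      rw [abs_lt] at habs
      have : α 1 = ((N:ℝ)⁻¹)^(2*l) := by linarith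
      linarith [habs.2]
    · linarith
  have hnodeL : ∀ l : ℕ, l ≤ p → ∀ n : ℕ, n ≤ N →
      iteratedDerivWithin (2*l) ℓ (Icc a b) (x n)
        = iteratedDerivWithin (2*l) g (Icc a b) (x n) := by
    intro l hl n hn
    rcases Nat.eq_zero_or_pos n with rfl | hn1
    · rw [hx0]; exact ha_node l hl
    · have hA := stepA n hn1 hn (2*l) (by omega) b (right_mem_Icc.mpr hab.le)
      rw [hLb n hn1] at hA
      have hQ := ((hq n hn1 hn).2 l hl).2
      rw [han n hn1, hxN] at hQ
      rw [hQ, hb_node l hl] at hA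
      have hne : ((N:ℝ)⁻¹)^(2*l) ≠ 0 := by positivity
      have hfac : ((N:ℝ)⁻¹)^(2*l) *
          (iteratedDerivWithin (2*l) ℓ (Icc a b) (x n)
            - iteratedDerivWithin (2*l) g (Icc a b) (x n)) = 0 := by
        linear_combination hA
      rcases mul_eq_zero.mp hfac with h | h
      · exact absurd h hne
      · linarith
  -- uniform bound on the 2p-th derivative of ℓ
  have hΦcont : ContinuousOn (iteratedDerivWithin (2*p) ℓ (Icc a b)) (Icc a b) :=
    hℓ.continuousOn_iteratedDerivWithin le_rfl uds
  obtain ⟨t₀, ht₀, hmax⟩ := isCompact_Icc.exists_isMaxOn (nonempty_Icc.mpr hab.le)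
    (continuous_abs.comp_continuousOn hΦcont)
  obtain ⟨n₀, hn₀1, hn₀N, ht₀1, ht₀2⟩ := lid_find_subinterval x hmono N (by omega) t₀
    (by rw [hx0, hxN]; exact ht₀)
  set s₀ : ℝ := (N:ℝ) * (t₀ - x (n₀-1)) + a with hs₀def
  have hstep' : x n₀ - x (n₀-1) = (b-a)/N := by rw [hstep n₀ hn₀1]; ring
  have hs₀ : s₀ ∈ Icc a b := by
    rw [hs₀def]
    constructor
    · have : (0:ℝ) ≤ (N:ℝ) * (t₀ - x (n₀-1)) := by nlinarith
      linarith
    · have h1 : t₀ - x (n₀-1) ≤ (b-a)/N := by linarith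
      have h2 : (N:ℝ)*(t₀ - x (n₀-1)) ≤ (N:ℝ)*((b-a)/N) := by nlinarith
      have h3 : (N:ℝ)*((b-a)/N) = b - a := by field_simp
      linarith
  have hLs₀ : L n₀ s₀ = t₀ := by
    rw [hLform n₀ hn₀1, hs₀def]
    field_simp
    ring
  have hA := stepA n₀ hn₀1 hn₀N (2*p) le_rfl s₀ hs₀
  rw [hLs₀] at hA
  obtain ⟨P, hPdeg, hPq⟩ := (hq n₀ hn₀1 hn₀N).1
  have hqP : q n₀ = fun v => P.eval v := funext hPq
  have hqit : iteratedDeriv (2*p) (q n₀) = fun u => (Polynomial.derivative^[2*p] P).eval u := by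
    rw [hqP]; exact lid_iteratedDeriv_polyEval _ _
  set Q : Polynomial ℝ := Polynomial.derivative^[2*p] P with hQdef
  have hQdeg : Q.natDegree ≤ 1 := by
    have h := lid_natDegree_iterate_derivative_le P (2*p+1) hPdeg (2*p)
    rw [← hQdef] at h
    omega
  have hpn : (0:ℝ) < ((N:ℝ)⁻¹)^(2*p) := by positivity
  have hαn := hα n₀ hn₀1 hn₀N
  have hpow : ((N:ℝ)^(2*p))⁻¹ = ((N:ℝ)⁻¹)^(2*p) := (inv_pow _ _).symm
  rw [hpow] at hαn
  have hQa : Q.eval a = ((N:ℝ)⁻¹)^(2*p) * iteratedDerivWithin (2*p) g (Icc a b) (x (n₀-1))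
      - α n₀ * iteratedDerivWithin (2*p) g (Icc a b) a := by
    have hQ1 := ((hq n₀ hn₀1 hn₀N).2 p le_rfl).1
    rw [han n₀ hn₀1, hx0] at hQ1
    rw [← hQ1, hqit]
  have hQb : Q.eval b = ((N:ℝ)⁻¹)^(2*p) * iteratedDerivWithin (2*p) g (Icc a b) (x n₀)
      - α n₀ * iteratedDerivWithin (2*p) g (Icc a b) b := by
    have hQ1 := ((hq n₀ hn₀1 hn₀N).2 p le_rfl).2
    rw [han n₀ hn₀1, hxN] at hQ1
    rw [← hQ1, hqit]
  have hQbound : |Q.eval s₀| ≤ (3/2) * ((N:ℝ)⁻¹)^(2*p) * G := by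
    have h1 := lid_affine_poly_bound Q hQdeg a b hab s₀ hs₀
    have hga := hG a (left_mem_Icc.mpr hab.le)
    have hgb := hG b (right_mem_Icc.mpr hab.le)
    have hgn := hG (x (n₀-1)) (hxmem _ (by omega))
    have hgn2 := hG (x n₀) (hxmem _ hn₀N)
    have e1 : |Q.eval a| ≤ (3/2) * ((N:ℝ)⁻¹)^(2*p) * G := by
      rw [hQa]
      have t1 : |((N:ℝ)⁻¹)^(2*p) * iteratedDerivWithin (2*p) g (Icc a b) (x (n₀-1))|
          ≤ ((N:ℝ)⁻¹)^(2*p) * G := by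
        rw [abs_mul, abs_of_pos hpn]
        exact mul_le_mul_of_nonneg_left hgn hpn.le
      have t2 : |α n₀ * iteratedDerivWithin (2*p) g (Icc a b) a|
          ≤ ((1/2) * ((N:ℝ)⁻¹)^(2*p)) * G := by
        rw [abs_mul]
        exact mul_le_mul hαn hga (abs_nonneg _) (by positivity)
      calc |((N:ℝ)⁻¹)^(2*p) * iteratedDerivWithin (2*p) g (Icc a b) (x (n₀-1))
            - α n₀ * iteratedDerivWithin (2*p) g (Icc a b) a|
          ≤ |((N:ℝ)⁻¹)^(2*p) * iteratedDerivWithin (2*p) g (Icc a b) (x (n₀-1))|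
            + |α n₀ * iteratedDerivWithin (2*p) g (Icc a b) a| := abs_sub _ _
        _ ≤ (3/2) * ((N:ℝ)⁻¹)^(2*p) * G := by linarith
    have e2 : |Q.eval b| ≤ (3/2) * ((N:ℝ)⁻¹)^(2*p) * G := by
      rw [hQb]
      have t1 : |((N:ℝ)⁻¹)^(2*p) * iteratedDerivWithin (2*p) g (Icc a b) (x n₀)|
          ≤ ((N:ℝ)⁻¹)^(2*p) * G := by
        rw [abs_mul, abs_of_pos hpn]
        exact mul_le_mul_of_nonneg_left hgn2 hpn.le
      have t2 : |α n₀ * iteratedDerivWithin (2*p) g (Icc a b) b|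
          ≤ ((1/2) * ((N:ℝ)⁻¹)^(2*p)) * G := by
        rw [abs_mul]
        exact mul_le_mul hαn hgb (abs_nonneg _) (by positivity)
      calc |((N:ℝ)⁻¹)^(2*p) * iteratedDerivWithin (2*p) g (Icc a b) (x n₀)
            - α n₀ * iteratedDerivWithin (2*p) g (Icc a b) b|
          ≤ |((N:ℝ)⁻¹)^(2*p) * iteratedDerivWithin (2*p) g (Icc a b) (x n₀)|
            + |α n₀ * iteratedDerivWithin (2*p) g (Icc a b) b| := abs_sub _ _
        _ ≤ (3/2) * ((N:ℝ)⁻¹)^(2*p) * G := by linarith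
    exact h1.trans (max_le e1 e2)
  have hΦt₀ : |iteratedDerivWithin (2*p) ℓ (Icc a b) t₀| ≤ 3*G := by
    have hmax₀ : |iteratedDerivWithin (2*p) ℓ (Icc a b) s₀|
        ≤ |iteratedDerivWithin (2*p) ℓ (Icc a b) t₀| := hmax hs₀
    have h2 : ((N:ℝ)⁻¹)^(2*p) * |iteratedDerivWithin (2*p) ℓ (Icc a b) t₀|
        = |((N:ℝ)⁻¹)^(2*p) * iteratedDerivWithin (2*p) ℓ (Icc a b) t₀| := by
      rw [abs_mul, abs_of_pos hpn]
    have h3 : |((N:ℝ)⁻¹)^(2*p) * iteratedDerivWithin (2*p) ℓ (Icc a b) t₀|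
        ≤ |α n₀ * iteratedDerivWithin (2*p) ℓ (Icc a b) s₀| + |iteratedDeriv (2*p) (q n₀) s₀| := by
      rw [hA]; exact abs_add_le _ _
    have h4 : |iteratedDeriv (2*p) (q n₀) s₀| = |Q.eval s₀| := by rw [hqit]
    have h5 : |α n₀ * iteratedDerivWithin (2*p) ℓ (Icc a b) s₀|
        ≤ ((1/2) * ((N:ℝ)⁻¹)^(2*p)) * |iteratedDerivWithin (2*p) ℓ (Icc a b) t₀| := by
      rw [abs_mul]
      exact mul_le_mul hαn hmax₀ (abs_nonneg _) (by positivity)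
    have h4' : |iteratedDeriv (2*p) (q n₀) s₀| ≤ (3/2) * ((N:ℝ)⁻¹)^(2*p) * G := by
      rw [h4]; exact hQbound
    have e : ((N:ℝ)⁻¹)^(2*p) * |iteratedDerivWithin (2*p) ℓ (Icc a b) t₀|
        ≤ (1/2) * ((N:ℝ)⁻¹)^(2*p) * |iteratedDerivWithin (2*p) ℓ (Icc a b) t₀|
          + (3/2) * ((N:ℝ)⁻¹)^(2*p) * G := by
      rw [h2]; linarith
    have key : ((N:ℝ)⁻¹)^(2*p) * |iteratedDerivWithin (2*p) ℓ (Icc a b) t₀|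
        ≤ ((N:ℝ)⁻¹)^(2*p) * (3*G) := by linarith
    exact (mul_le_mul_iff_right₀ hpn).mp key
  have hΦ : ∀ u ∈ Icc a b, |iteratedDerivWithin (2*p) ℓ (Icc a b) u| ≤ 3*G :=
    fun u hu => le_trans (hmax hu) hΦt₀
  -- the error function and its derivatives
  set E : ℕ → ℝ → ℝ := fun j u => iteratedDerivWithin j g (Icc a b) u
    - iteratedDerivWithin j ℓ (Icc a b) u with hEdef
  have hEcont : ∀ j : ℕ, j ≤ 2*p → ContinuousOn (E j) (Icc a b) := by
    intro j hj
    exact (hg.continuousOn_iteratedDerivWithin (by exact_mod_cast hj) uds).sub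
      (hℓ.continuousOn_iteratedDerivWithin (by exact_mod_cast hj) uds)
  have hEdiff : ∀ j : ℕ, j < 2*p → DifferentiableOn ℝ (E j) (Icc a b) := by
    intro j hj
    exact (hg.differentiableOn_iteratedDerivWithin (by exact_mod_cast hj) uds).sub
      (hℓ.differentiableOn_iteratedDerivWithin (by exact_mod_cast hj) uds)
  have hEderiv : ∀ j : ℕ, j < 2*p → ∀ u ∈ Icc a b, derivWithin (E j) (Icc a b) u = E (j+1) u := by
    intro j hj u hu
    have hgd : DifferentiableWithinAt ℝ (iteratedDerivWithin j g (Icc a b)) (Icc a b) u :=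
      hg.differentiableOn_iteratedDerivWithin (by exact_mod_cast hj) uds u hu
    have hld : DifferentiableWithinAt ℝ (iteratedDerivWithin j ℓ (Icc a b)) (Icc a b) u :=
      hℓ.differentiableOn_iteratedDerivWithin (by exact_mod_cast hj) uds u hu
    have husu : UniqueDiffWithinAt ℝ (Icc a b) u := uds.uniqueDiffWithinAt hu
    simp only [hEdef]
    rw [derivWithin_fun_sub hgd hld, ← iteratedDerivWithin_succ,
      ← iteratedDerivWithin_succ]
  have hEnode : ∀ l : ℕ, l ≤ p → ∀ n : ℕ, n ≤ N → E (2*l) (x n) = 0 := by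
    intro l hl n hn
    simp only [hEdef]
    rw [hnodeL l hl n hn, sub_self]
  have hlip : ∀ j : ℕ, j < 2*p → ∀ B : ℝ, (∀ u ∈ Icc a b, |E (j+1) u| ≤ B) →
      ∀ u ∈ Icc a b, ∀ v ∈ Icc a b, |E j u - E j v| ≤ B * |u - v| := by
    intro j hj B hbound u hu v hv
    have h := Convex.norm_image_sub_le_of_norm_derivWithin_le (𝕜 := ℝ) (f := E j)
      (hEdiff j hj) (fun w hw => by
        rw [Real.norm_eq_abs, hEderiv j hj w hw]; exact hbound w hw)
      (convex_Icc a b) hv hu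
    simpa [Real.norm_eq_abs] using h
  have hrolle : ∀ l : ℕ, l + 1 ≤ p → ∀ n : ℕ, 1 ≤ n → n ≤ N →
      ∃ z, z ∈ Icc a b ∧ x (n-1) ≤ z ∧ z ≤ x n ∧ E (2*l+1) z = 0 := by
    intro l hl n hn1 hnN
    have h2l : 2*l < 2*p := by omega
    have hxa : a ≤ x (n-1) := (hxmem (n-1) (by omega)).1
    have hxb : x n ≤ b := (hxmem n hnN).2
    have hcont' : ContinuousOn (E (2*l)) (Icc (x (n-1)) (x n)) :=
      (hEcont (2*l) (by omega)).mono (Icc_subset_Icc hxa hxb)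
    have hend : E (2*l) (x (n-1)) = E (2*l) (x n) := by
      rw [hEnode l (by omega) (n-1) (by omega), hEnode l (by omega) n hnN]
    have hhd : ∀ w ∈ Ioo (x (n-1)) (x n), HasDerivAt (E (2*l)) (E (2*l+1) w) w := by
      intro w hw
      have hwI : w ∈ Icc a b := ⟨hxa.trans hw.1.le, hw.2.le.trans hxb⟩
      have hmem : Icc a b ∈ 𝓝 w :=
        Icc_mem_nhds (lt_of_le_of_lt hxa hw.1) (lt_of_lt_of_le hw.2 hxb)
      have hdw : DifferentiableAt ℝ (E (2*l)) w :=
        ((hEdiff (2*l) h2l) w hwI).differentiableAt hmem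
      have hder : deriv (E (2*l)) w = E (2*l+1) w := by
        rw [← hdw.derivWithin (uds.uniqueDiffWithinAt hwI), hEderiv (2*l) h2l w hwI]
      exact hder ▸ hdw.hasDerivAt
    obtain ⟨z, hz, hz0⟩ := exists_hasDerivAt_eq_zero (f := E (2*l)) (f' := E (2*l+1))
      (hxlt n hn1) hcont' hend hhd
    exact ⟨z, ⟨hxa.trans hz.1.le, hz.2.le.trans hxb⟩, hz.1.le, hz.2.le, hz0⟩
  -- the descent induction
  set K : ℝ := ((b-a)+1) * (N:ℝ)⁻¹ with hKdef
  have hK0 : (0:ℝ) ≤ K := by rw [hKdef]; positivity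
  have hstepK : ∀ n : ℕ, 1 ≤ n → x n - x (n-1) ≤ K := by
    intro n hn
    have h1 : x n - x (n-1) = (b-a)/N := by rw [hstep n hn]; ring
    rw [h1, hKdef, div_eq_mul_inv]
    have h2 : (0:ℝ) ≤ (N:ℝ)⁻¹ := by positivity
    nlinarith
  have hmain : ∀ d : ℕ, d ≤ p → ∀ u ∈ Icc a b, |E (2*(p-d)) u| ≤ (4*G) * K^(2*d) := by
    intro d
    induction d with
    | zero =>
      intro _ u hu
      have h1 : |E (2*p) u| ≤ 4*G := by
        simp only [hEdef]
        have hg1 := hG u hu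
        have hl1 := hΦ u hu
        calc |iteratedDerivWithin (2*p) g (Icc a b) u - iteratedDerivWithin (2*p) ℓ (Icc a b) u|
            ≤ |iteratedDerivWithin (2*p) g (Icc a b) u|
              + |iteratedDerivWithin (2*p) ℓ (Icc a b) u| := abs_sub _ _
          _ ≤ 4*G := by linarith
      simpa using h1
    | succ d IH =>
      intro hd u hu
      have hIH := IH (by omega)
      have h2eq : 2*(p-d) = 2*(p-(d+1))+1+1 := by omega
      rw [h2eq] at hIH
      have hBd0 : (0:ℝ) ≤ 4*G*K^(2*d) := by positivity
      have hodd : ∀ v ∈ Icc a b, |E (2*(p-(d+1))+1) v| ≤ (4*G*K^(2*d)) * K := by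
        intro v hv
        obtain ⟨n, hn1, hnN, h3, h4⟩ := lid_find_subinterval x hmono N (by omega) v
          (by rw [hx0, hxN]; exact hv)
        obtain ⟨z, hzI, hz1, hz2, hz0⟩ := hrolle (p-(d+1)) (by omega) n hn1 hnN
        have hvz : |v - z| ≤ K := by
          have hK' := hstepK n hn1
          rw [abs_sub_le_iff]
          constructor <;> linarith
        calc |E (2*(p-(d+1))+1) v| = |E (2*(p-(d+1))+1) v - E (2*(p-(d+1))+1) z| := by
              rw [hz0, sub_zero]
          _ ≤ (4*G*K^(2*d)) * |v - z| :=
              hlip (2*(p-(d+1))+1) (by omega) _ hIH v hv z hzI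
          _ ≤ (4*G*K^(2*d)) * K := mul_le_mul_of_nonneg_left hvz hBd0
      obtain ⟨n, hn1, hnN, h3, h4⟩ := lid_find_subinterval x hmono N (by omega) u
        (by rw [hx0, hxN]; exact hu)
      have hxnode : E (2*(p-(d+1))) (x (n-1)) = 0 := hEnode (p-(d+1)) (by omega) (n-1) (by omega)
      have hxmem' : x (n-1) ∈ Icc a b := hxmem (n-1) (by omega)
      have hux : |u - x (n-1)| ≤ K := by
        have hK' := hstepK n hn1
        rw [abs_sub_le_iff]
        constructor <;> linarith
      have hBd1 : (0:ℝ) ≤ 4*G*K^(2*d) * K := by positivity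
      have hfin : |E (2*(p-(d+1))) u| ≤ (4*G*K^(2*d) * K) * K := by
        calc |E (2*(p-(d+1))) u| = |E (2*(p-(d+1))) u - E (2*(p-(d+1))) (x (n-1))| := by
              rw [hxnode, sub_zero]
          _ ≤ (4*G*K^(2*d)*K) * |u - x (n-1)| :=
              hlip (2*(p-(d+1))) (by omega) _ hodd u hu (x (n-1)) hxmem'
          _ ≤ (4*G*K^(2*d)*K) * K := mul_le_mul_of_nonneg_left hux hBd1
      refine hfin.trans (le_of_eq ?_)
      have h5 : 2*(d+1) = 2*d+1+1 := by omega
      rw [h5, pow_succ, pow_succ]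
      ring
  -- conclusion
  have hfinal := hmain (p-k) (by omega) t ht
  have h2k : 2*(p-(p-k)) = 2*k := by omega
  rw [h2k] at hfinal
  have hEt : |iteratedDerivWithin (2*k) g (Icc a b) t - iteratedDerivWithin (2*k) ℓ (Icc a b) t|
      = |E (2*k) t| := by simp [hEdef]
  rw [hEt]
  refine hfinal.trans ?_
  have hexp : 2*p - 2*k = 2*(p-k) := by omega
  rw [hexp, ← inv_pow, hKdef, mul_pow]
  have h1 : ((b-a)+1)^(2*(p-k)) ≤ ((b-a)+1)^(2*p) := by
    apply pow_le_pow_right₀ (by linarith) (by omega)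
  have h2 : (0:ℝ) ≤ ((N:ℝ)⁻¹)^(2*(p-k)) := by positivity
  calc 4*G * (((b-a)+1)^(2*(p-k)) * ((N:ℝ)⁻¹)^(2*(p-k)))
      = (4*G * ((b-a)+1)^(2*(p-k))) * ((N:ℝ)⁻¹)^(2*(p-k)) := by ring
    _ ≤ ((4*G+4) * ((b-a)+1)^(2*p)) * ((N:ℝ)⁻¹)^(2*(p-k)) := by
        apply mul_le_mul_of_nonneg_right _ h2
        apply mul_le_mul (by linarith) h1 (by positivity) (by linarith)
    _ = (4*G+4) * ((b-a)+1)^(2*p) * ((N:ℝ)⁻¹)^(2*(p-k)) := by ring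
end
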